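/- arXiv:1210.6729 — 4 statements merged into one kernel-verified Lean document; each statement's English description precedes it below -/
import Mathlib

section
/- Fix positive integers t ≤ m ≤ n, let X be an m×n matrix of indeterminates over a field 𝔽 of prime characteristic, R = 𝔽[X], and for 1 ≤ j ≤ m let I_j be the ideal of j×j minors of X. Let s be a positive integer and let δ_1, …, δ_h be minors of X with h ≤ s and with the sum of their sizes equal to ts. Then for every j with 1 ≤ j ≤ t, the product δ_1⋯δ_h lies in the symbolic power I_j^{((t−j+1)s)}. -/
open MvPolynomial

/-- The generic `m × n` matrix `X`, whose entries are the variables `x_{ij}` of the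
polynomial ring `𝔽[X]`. -/
noncomputable def genMat (𝔽 : Type*) [Field 𝔽] (m n : ℕ) :
    Matrix (Fin m) (Fin n) (MvPolynomial (Fin m × Fin n) 𝔽) :=
  Matrix.of fun i j => MvPolynomial.X (i, j)

/-- `f` is a size `s` minor of the generic `m × n` matrix: the determinant of the submatrix
obtained by choosing `s` rows and `s` columns (in increasing order). -/
def IsMinor (𝔽 : Type*) [Field 𝔽] (m n s : ℕ) (f : MvPolynomial (Fin m × Fin n) 𝔽) : Prop :=
  ∃ (row : Fin s → Fin m) (col : Fin s → Fin n), StrictMono row ∧ StrictMono col ∧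
    f = ((genMat 𝔽 m n).submatrix row col).det

/-- `I_s ⊆ 𝔽[X]`, the ideal generated by the size `s` minors of the generic matrix. -/
noncomputable def minorsIdeal (𝔽 : Type*) [Field 𝔽] (m n s : ℕ) :
    Ideal (MvPolynomial (Fin m × Fin n) 𝔽) :=
  Ideal.span {f | IsMinor 𝔽 m n s f}

/-- The `r`-th symbolic power `P^{(r)} = P^r R_P ∩ R` of a prime ideal `P`, described
elementwise: `x ∈ P^{(r)}` iff `s·x ∈ P^r` for some `s ∉ P`. -/
def memSymbolicPower {R : Type*} [CommRing R] (P : Ideal R) (r : ℕ) (x : R) : Prop :=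
  ∃ u : R, u ∉ P ∧ u * x ∈ P ^ r


section Helpers

variable {A : Type*} [CommRing A]

lemma prod_mem_pow_card {ι : Type*} (J : Ideal A) (s : Finset ι) (f : ι → A)
    (h : ∀ i ∈ s, f i ∈ J) : ∏ i ∈ s, f i ∈ J ^ s.card := by
  classical
  induction s using Finset.induction with
  | empty => simp
  | insert _ _ hx ih =>
    rename_i a s'
    rw [Finset.prod_insert hx, Finset.card_insert_of_notMem hx, pow_succ, mul_comm]
    exact Ideal.mul_mem_mul (h a (Finset.mem_insert_self a s'))
      (ih fun i hi => h i (Finset.mem_insert_of_mem hi))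

lemma prod_mem_pow_sum {ι : Type*} (J : Ideal A) (s : Finset ι) (f : ι → A) (a : ι → ℕ)
    (h : ∀ i ∈ s, f i ∈ J ^ a i) : ∏ i ∈ s, f i ∈ J ^ (∑ i ∈ s, a i) := by
  classical
  induction s using Finset.induction with
  | empty => simp
  | insert _ _ hx ih =>
    rename_i b s'
    rw [Finset.prod_insert hx, Finset.sum_insert hx, pow_add]
    exact Ideal.mul_mem_mul (h b (Finset.mem_insert_self b s'))
      (ih fun i hi => h i (Finset.mem_insert_of_mem hi))

lemma det_mem_pow {e : ℕ} (J : Ideal A) (M : Matrix (Fin e) (Fin e) A)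
    (h : ∀ i j, M i j ∈ J) : M.det ∈ J ^ e := by
  rw [Matrix.det_apply']
  refine Ideal.sum_mem _ fun σ _ => Ideal.mul_mem_left _ _ ?_
  have := prod_mem_pow_card J Finset.univ (fun i => M (σ i) i) (fun i _ => h _ _)
  simpa using this

lemma det_mul_rect_eq_zero {k j : ℕ} (hkj : k < j)
    (P : Matrix (Fin j) (Fin k) A) (Q : Matrix (Fin k) (Fin j) A) :
    Matrix.det (P * Q) = 0 := by
  set P₁ : Matrix (Fin j) (Fin j) A :=
    Matrix.of fun i c => if h : (c : ℕ) < k then P i ⟨c, h⟩ else 0 with hP₁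
  set Q₁ : Matrix (Fin j) (Fin j) A :=
    Matrix.of fun r c => if h : (r : ℕ) < k then Q ⟨r, h⟩ c else 0 with hQ₁
  have hPQ : P * Q = P₁ * Q₁ := by
    ext i c
    rw [Matrix.mul_apply, Matrix.mul_apply]
    set g : ℕ → A := fun a => if h : a < k then P i ⟨a, h⟩ * Q ⟨a, h⟩ c else 0 with hg
    have hterm : ∀ b : Fin j, P₁ i b * Q₁ b c = g (b : ℕ) := by
      intro b
      by_cases hb : (b : ℕ) < k <;> simp [hP₁, hQ₁, hg, hb]
    calc ∑ a : Fin k, P i a * Q a c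
        = ∑ a : Fin k, g (a : ℕ) := by
          apply Finset.sum_congr rfl; intro a _; simp [hg, a.isLt]
      _ = ∑ a ∈ Finset.range k, g a := Fin.sum_univ_eq_sum_range g k
      _ = ∑ a ∈ Finset.range j, g a := by
          refine Finset.sum_subset (Finset.range_subset_range.2 hkj.le) ?_
          intro x _ hx
          rw [Finset.mem_range, not_lt] at hx
          exact dif_neg (by omega)
      _ = ∑ a : Fin j, g (a : ℕ) := (Fin.sum_univ_eq_sum_range g j).symm
      _ = ∑ b : Fin j, P₁ i b * Q₁ b c := by
          apply Finset.sum_congr rfl; intro b _; exact (hterm b).symm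
  have hP₁det : P₁.det = 0 := by
    apply Matrix.det_eq_zero_of_column_eq_zero ⟨k, hkj⟩
    intro i
    simp [hP₁]
  rw [hPQ, Matrix.det_mul, hP₁det, zero_mul]

lemma sylvester_det {K : Type*} [Field K] {k e : ℕ} (he : 0 < e)
    (M : Matrix (Fin k ⊕ Fin e) (Fin k ⊕ Fin e) K)
    (hA : (M.toBlocks₁₁).det ≠ 0) :
    Matrix.det (Matrix.of fun i i' : Fin e =>
      Matrix.det (M.submatrix (Sum.elim Sum.inl fun _ : Fin 1 => Sum.inr i)
        (Sum.elim Sum.inl fun _ : Fin 1 => Sum.inr i'))) =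
    (M.toBlocks₁₁).det ^ (e - 1) * M.det := by
  set A := M.toBlocks₁₁ with hAdef
  set B := M.toBlocks₁₂
  set C := M.toBlocks₂₁
  set D := M.toBlocks₂₂
  haveI : Invertible A := A.invertibleOfIsUnitDet (isUnit_iff_ne_zero.2 hA)
  have hM : M = Matrix.fromBlocks A B C D := (Matrix.fromBlocks_toBlocks M).symm
  have hdetM : M.det = A.det * (D - C * ⅟A * B).det := by
    conv_lhs => rw [hM]
    exact Matrix.det_fromBlocks₁₁ A B C D
  have hentry : ∀ i i' : Fin e,
      Matrix.det (M.submatrix (Sum.elim Sum.inl fun _ : Fin 1 => Sum.inr i)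
        (Sum.elim Sum.inl fun _ : Fin 1 => Sum.inr i')) =
      A.det * (D - C * ⅟A * B) i i' := by
    intro i i'
    have hsub : M.submatrix (Sum.elim Sum.inl fun _ : Fin 1 => Sum.inr i)
        (Sum.elim Sum.inl fun _ : Fin 1 => Sum.inr i') =
        Matrix.fromBlocks A (Matrix.of fun a (_ : Fin 1) => B a i')
          (Matrix.of fun (_ : Fin 1) b => C i b) (Matrix.of fun (_ _ : Fin 1) => D i i') := by
      ext a b
      rcases a with a | a <;> rcases b with b | b <;> rfl
    rw [hsub, Matrix.det_fromBlocks₁₁]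
    congr 1
    rw [Matrix.det_unique]
    simp [Matrix.sub_apply, Matrix.mul_apply]
  have hmat : (Matrix.of fun i i' : Fin e =>
      Matrix.det (M.submatrix (Sum.elim Sum.inl fun _ : Fin 1 => Sum.inr i)
        (Sum.elim Sum.inl fun _ : Fin 1 => Sum.inr i'))) =
      A.det • (D - C * ⅟A * B) := by
    ext i i'
    rw [Matrix.of_apply, hentry i i', Matrix.smul_apply, smul_eq_mul]
  rw [hmat, Matrix.det_smul, hdetM, Fintype.card_fin]
  obtain ⟨e', rfl⟩ : ∃ e', e = e' + 1 := ⟨e - 1, by omega⟩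
  rw [Nat.add_sub_cancel, pow_succ]
  ring

end Helpers

section Gen

variable (𝔽 : Type*) [Field 𝔽] (m n : ℕ)

lemma genericMinor_ne_zero {a : ℕ} (row : Fin a → Fin m) (col : Fin a → Fin n)
    (hrow : Function.Injective row) (hcol : Function.Injective col) :
    ((genMat 𝔽 m n).submatrix row col).det ≠ 0 := by
  classical
  set ψ : MvPolynomial (Fin m × Fin n) 𝔽 →ₐ[𝔽] 𝔽 :=
    aeval fun q : Fin m × Fin n => if (∃ b, row b = q.1 ∧ col b = q.2) then (1 : 𝔽) else 0 with hψ
  intro h0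
  have h1 : ψ (((genMat 𝔽 m n).submatrix row col).det) = 1 := by
    rw [AlgHom.map_det, AlgHom.mapMatrix_apply]
    have : ((genMat 𝔽 m n).submatrix row col).map ψ = 1 := by
      ext b c
      simp only [Matrix.map_apply, Matrix.submatrix_apply, genMat, Matrix.of_apply, hψ, aeval_X]
      by_cases hbc : b = c
      · subst hbc
        rw [if_pos ⟨b, rfl, rfl⟩, Matrix.one_apply_eq]
      · rw [Matrix.one_apply_ne hbc, if_neg]
        rintro ⟨b', hb1, hb2⟩
        exact hbc ((hrow hb1).symm.trans (hcol hb2))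
    rw [this, Matrix.det_one]
  rw [h0, map_zero] at h1
  exact zero_ne_one h1

/-- Cauchy–Binet substitution `x_{ic} ↦ ∑_b y_{ib} z_{bc}`. -/
noncomputable def cbHom (k : ℕ) :
    MvPolynomial (Fin m × Fin n) 𝔽 →ₐ[𝔽] MvPolynomial ((Fin m × Fin k) ⊕ (Fin k × Fin n)) 𝔽 :=
  aeval fun q => ∑ b : Fin k, X (Sum.inl (q.1, b)) * X (Sum.inr (b, q.2))

lemma cbHom_kills {k j : ℕ} (hkj : k < j) {f : MvPolynomial (Fin m × Fin n) 𝔽}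
    (hf : IsMinor 𝔽 m n j f) : cbHom 𝔽 m n k f = 0 := by
  obtain ⟨row, col, _, _, rfl⟩ := hf
  rw [AlgHom.map_det, AlgHom.mapMatrix_apply]
  set S := MvPolynomial ((Fin m × Fin k) ⊕ (Fin k × Fin n)) 𝔽
  set P : Matrix (Fin j) (Fin k) S := Matrix.of fun b a => X (Sum.inl (row b, a)) with hP
  set Q : Matrix (Fin k) (Fin j) S := Matrix.of fun a c => X (Sum.inr (a, col c)) with hQ
  have : ((genMat 𝔽 m n).submatrix row col).map (cbHom 𝔽 m n k) = P * Q := by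
    ext b c
    simp only [Matrix.map_apply, Matrix.submatrix_apply, genMat, Matrix.of_apply, cbHom, aeval_X,
      Matrix.mul_apply, hP, hQ]
  rw [this]
  exact det_mul_rect_eq_zero hkj P Q

lemma cbHom_minor_ne_zero {k : ℕ} {f : MvPolynomial (Fin m × Fin n) 𝔽}
    (hf : IsMinor 𝔽 m n k f) : cbHom 𝔽 m n k f ≠ 0 := by
  classical
  obtain ⟨row, col, hrow, hcol, rfl⟩ := hf
  rw [AlgHom.map_det, AlgHom.mapMatrix_apply]
  set S := MvPolynomial ((Fin m × Fin k) ⊕ (Fin k × Fin n)) 𝔽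
  set P : Matrix (Fin k) (Fin k) S := Matrix.of fun b a => X (Sum.inl (row b, a)) with hP
  set Q : Matrix (Fin k) (Fin k) S := Matrix.of fun a c => X (Sum.inr (a, col c)) with hQ
  have hmat : ((genMat 𝔽 m n).submatrix row col).map (cbHom 𝔽 m n k) = P * Q := by
    ext b c
    simp only [Matrix.map_apply, Matrix.submatrix_apply, genMat, Matrix.of_apply, cbHom, aeval_X,
      Matrix.mul_apply, hP, hQ]
  rw [hmat, Matrix.det_mul]
  have hPne : P.det ≠ 0 := by
    set ψ : S →ₐ[𝔽] 𝔽 := aeval (Sum.elim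
      (fun ab : Fin m × Fin k => if ab.1 = row ab.2 then (1 : 𝔽) else 0) (fun _ => 0)) with hψ
    intro h0
    have h1 : ψ P.det = 1 := by
      rw [AlgHom.map_det, AlgHom.mapMatrix_apply]
      have : P.map ψ = 1 := by
        ext b a
        simp only [Matrix.map_apply, hP, Matrix.of_apply, hψ]
        rw [aeval_X, Sum.elim_inl, Matrix.one_apply]
        by_cases hba : b = a
        · simp [hba]
        · rw [if_neg (fun hh => hba (hrow.injective hh)), if_neg hba]
      rw [this, Matrix.det_one]
    rw [h0, map_zero] at h1
    exact zero_ne_one h1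
  have hQne : Q.det ≠ 0 := by
    set ψ : S →ₐ[𝔽] 𝔽 := aeval (Sum.elim (fun _ => 0)
      (fun bc : Fin k × Fin n => if col bc.1 = bc.2 then (1 : 𝔽) else 0)) with hψ
    intro h0
    have h1 : ψ Q.det = 1 := by
      rw [AlgHom.map_det, AlgHom.mapMatrix_apply]
      have : Q.map ψ = 1 := by
        ext a c
        simp only [Matrix.map_apply, hQ, Matrix.of_apply, hψ]
        rw [aeval_X, Sum.elim_inr, Matrix.one_apply]
        by_cases hac : a = c
        · simp [hac]
        · rw [if_neg (fun hh => hac (hcol.injective hh)), if_neg hac]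
      rw [this, Matrix.det_one]
    rw [h0, map_zero] at h1
    exact zero_ne_one h1
  exact mul_ne_zero hPne hQne

end Gen

section Core

variable (𝔽 : Type*) [Field 𝔽] (m n : ℕ)

lemma core_minor (j : ℕ) (hj : 1 ≤ j) (d : ℕ) (f : MvPolynomial (Fin m × Fin n) 𝔽)
    (hf : IsMinor 𝔽 m n d f) :
    ∃ u, cbHom 𝔽 m n (j - 1) u ≠ 0 ∧
      u * f ∈ (minorsIdeal 𝔽 m n j) ^ (d - (j - 1)) := by
  by_cases hd : d < j
  · refine ⟨1, by simp, ?_⟩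
    have h0 : d - (j - 1) = 0 := by omega
    rw [h0, pow_zero]
    simp
  push_neg at hd
  set k := j - 1 with hk
  set e := d - k with hedef
  have he : 0 < e := by omega
  have hke : k + e = d := by omega
  have hj1 : k + 1 = j := by omega
  obtain ⟨row, col, hrow, hcol, hfdet⟩ := hf
  let K := FractionRing (MvPolynomial (Fin m × Fin n) 𝔽)
  let ι : MvPolynomial (Fin m × Fin n) 𝔽 →+* K := algebraMap _ K
  have hι : Function.Injective ι := IsFractionRing.injective (MvPolynomial (Fin m × Fin n) 𝔽) K
  set Mf : Matrix (Fin d) (Fin d) K := ((genMat 𝔽 m n).submatrix row col).map ι with hMf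
  set σe : (Fin k ⊕ Fin e) ≃ Fin d := finSumFinEquiv.trans (finCongr hke) with hσe
  set M : Matrix (Fin k ⊕ Fin e) (Fin k ⊕ Fin e) K := Mf.submatrix σe σe with hM
  set lmap : Fin k → Fin d := fun a => σe (Sum.inl a) with hlmap
  have hlval : ∀ a : Fin k, ((lmap a : Fin d) : ℕ) = (a : ℕ) := by
    intro a; simp [hlmap, hσe]
  have hlm : StrictMono lmap := by
    intro a b hab; rw [Fin.lt_def, hlval, hlval]; exact hab
  set Δ : MvPolynomial (Fin m × Fin n) 𝔽 := ((genMat 𝔽 m n).submatrix (row ∘ lmap) (col ∘ lmap)).det with hΔ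
  have hΔminor : IsMinor 𝔽 m n k Δ :=
    ⟨row ∘ lmap, col ∘ lmap, hrow.comp hlm, hcol.comp hlm, rfl⟩
  have hΔne : Δ ≠ 0 := genericMinor_ne_zero 𝔽 m n _ _
    ((hrow.comp hlm).injective) ((hcol.comp hlm).injective)
  have hAblock : M.toBlocks₁₁ = ((genMat 𝔽 m n).submatrix (row ∘ lmap) (col ∘ lmap)).map ι := by
    ext a b; rfl
  have hAdet : (M.toBlocks₁₁).det = ι Δ := by
    rw [hAblock, hΔ, RingHom.map_det, RingHom.mapMatrix_apply]
  have hAne : (M.toBlocks₁₁).det ≠ 0 := by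
    rw [hAdet]
    exact fun hz => hΔne (hι (by rw [hz, map_zero]))
  set pe : (Fin k ⊕ Fin 1) ≃ Fin j := finSumFinEquiv.trans (finCongr hj1) with hpe
  set pmap : Fin e → Fin j → Fin d := fun i b =>
    σe (Sum.elim Sum.inl (fun _ : Fin 1 => Sum.inr i) (pe.symm b)) with hpmap
  have hpval : ∀ (i : Fin e) (b : Fin j),
      ((pmap i b : Fin d) : ℕ) = if (b : ℕ) < k then (b : ℕ) else k + (i : ℕ) := by
    intro i b
    rcases hsb : pe.symm b with a | c
    · have hb : b = pe (Sum.inl a) := by rw [← hsb, Equiv.apply_symm_apply]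
      have hbv : (b : ℕ) = (a : ℕ) := by rw [hb]; simp [hpe]
      rw [hpmap]; simp only [hsb, Sum.elim_inl]
      rw [if_pos (by rw [hbv]; exact a.isLt)]
      simp [hσe, hbv]
    · have hb : b = pe (Sum.inr c) := by rw [← hsb, Equiv.apply_symm_apply]
      have hbv : (b : ℕ) = k := by
        rw [hb]; simp [hpe]
      rw [hpmap]; simp only [hsb, Sum.elim_inr]
      rw [if_neg (by omega)]
      simp [hσe]
  have hpm : ∀ i : Fin e, StrictMono (pmap i) := by
    intro i b b' hbb
    rw [Fin.lt_def, hpval, hpval]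
    rw [Fin.lt_def] at hbb
    have hb' : (b' : ℕ) < k + 1 := by rw [hj1]; exact b'.isLt
    split_ifs <;> omega
  set cR : Matrix (Fin e) (Fin e) (MvPolynomial (Fin m × Fin n) 𝔽) := Matrix.of fun i i' =>
    ((genMat 𝔽 m n).submatrix (row ∘ pmap i) (col ∘ pmap i')).det with hcR
  have hcmem : ∀ i i', cR i i' ∈ minorsIdeal 𝔽 m n j := by
    intro i i'
    exact Ideal.subset_span ⟨row ∘ pmap i, col ∘ pmap i',
      hrow.comp (hpm i), hcol.comp (hpm i'), rfl⟩
  have hcι : ∀ i i' : Fin e, ι (cR i i') =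
      (M.submatrix (Sum.elim Sum.inl fun _ : Fin 1 => Sum.inr i)
        (Sum.elim Sum.inl fun _ : Fin 1 => Sum.inr i')).det := by
    intro i i'
    rw [← Matrix.det_submatrix_equiv_self pe.symm
      (M.submatrix (Sum.elim Sum.inl fun _ : Fin 1 => Sum.inr i)
        (Sum.elim Sum.inl fun _ : Fin 1 => Sum.inr i'))]
    rw [hcR, Matrix.of_apply, RingHom.map_det, RingHom.mapMatrix_apply]
    congr 1
  have hdetM : M.det = ι f := by
    rw [hM, Matrix.det_submatrix_equiv_self, hMf, hfdet, RingHom.map_det, RingHom.mapMatrix_apply]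
  have hsyl := sylvester_det he M hAne
  have hof : (Matrix.of fun i i' : Fin e =>
      Matrix.det (M.submatrix (Sum.elim Sum.inl fun _ : Fin 1 => Sum.inr i)
        (Sum.elim Sum.inl fun _ : Fin 1 => Sum.inr i'))) = cR.map ι := by
    ext i i'
    rw [Matrix.map_apply, Matrix.of_apply, hcι i i']
  rw [hof] at hsyl
  have hkey : cR.det = Δ ^ (e - 1) * f := by
    apply hι
    rw [RingHom.map_det, RingHom.mapMatrix_apply, hsyl, hAdet, hdetM, map_mul, map_pow]
  refine ⟨Δ ^ (e - 1), ?_, ?_⟩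
  · rw [map_pow]
    exact pow_ne_zero _ (cbHom_minor_ne_zero 𝔽 m n hΔminor)
  · rw [← hkey]
    exact det_mem_pow _ _ hcmem

end Core

lemma arith_aux (t s hh j : ℕ) (hj1 : 1 ≤ j) (hjt : j ≤ t) (hhs : hh ≤ s) (A : ℕ)
    (hsum : t * s ≤ A + hh * (j - 1)) : (t - j + 1) * s ≤ A := by
  obtain ⟨b, rfl⟩ : ∃ b, j = b + 1 := ⟨j - 1, by omega⟩
  obtain ⟨a, rfl⟩ : ∃ a, t = (b + 1) + a := ⟨t - (b + 1), by omega⟩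
  have h1 : (b + 1 + a) - (b + 1) + 1 = a + 1 := by omega
  rw [h1]
  simp only [Nat.add_sub_cancel] at hsum
  have h2 : hh * b ≤ s * b := Nat.mul_le_mul_right b hhs
  have h4 : (a + 1) * s + s * b ≤ A + s * b := by
    calc (a + 1) * s + s * b = (b + 1 + a) * s := by ring
      _ ≤ A + hh * b := hsum
      _ ≤ A + s * b := Nat.add_le_add_left h2 A
  exact Nat.le_of_add_le_add_right h4


/-- If `δ_1, …, δ_h` are minors of the generic `m × n` matrix with `h ≤ s` and total size
`ts`, then for every `1 ≤ j ≤ t` the product `δ_1 ⋯ δ_h` lies in the symbolic power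
`I_j^{((t-j+1)s)}`. -/
theorem prod_minors_mem_symbolicPower (p : ℕ) (hp : p.Prime)
    (𝔽 : Type*) [Field 𝔽] [CharP 𝔽 p]
    (m n t : ℕ) (ht : 0 < t) (htm : t ≤ m) (hmn : m ≤ n)
    (s : ℕ) (hs : 0 < s) (h : ℕ) (hhs : h ≤ s)
    (sz : Fin h → ℕ) (δ : Fin h → MvPolynomial (Fin m × Fin n) 𝔽)
    (hminor : ∀ i, IsMinor 𝔽 m n (sz i) (δ i))
    (hdeg : ∑ i, sz i = t * s) :
    ∀ j ∈ Finset.Icc 1 t,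
      memSymbolicPower (minorsIdeal 𝔽 m n j) ((t - j + 1) * s) (∏ i, δ i) := by
  intro j hj
  rw [Finset.mem_Icc] at hj
  obtain ⟨hj1, hjt⟩ := hj
  have hcore : ∀ i : Fin h, ∃ u, cbHom 𝔽 m n (j - 1) u ≠ 0 ∧
      u * δ i ∈ (minorsIdeal 𝔽 m n j) ^ (sz i - (j - 1)) := fun i =>
    core_minor 𝔽 m n j hj1 (sz i) (δ i) (hminor i)
  choose u hu1 hu2 using hcore
  refine ⟨∏ i, u i, ?_, ?_⟩
  · intro hmem
    have hker : minorsIdeal 𝔽 m n j ≤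
        RingHom.ker (cbHom 𝔽 m n (j - 1)).toRingHom := by
      rw [minorsIdeal, Ideal.span_le]
      intro g hg
      rw [SetLike.mem_coe, RingHom.mem_ker]
      exact cbHom_kills 𝔽 m n (by omega) hg
    have h0 : cbHom 𝔽 m n (j - 1) (∏ i, u i) = 0 := hker hmem
    rw [map_prod] at h0
    obtain ⟨i, -, hi⟩ := Finset.prod_eq_zero_iff.1 h0
    exact hu1 i hi
  · rw [← Finset.prod_mul_distrib]
    have hmem : ∏ i, (u i * δ i) ∈
        (minorsIdeal 𝔽 m n j) ^ (∑ i, (sz i - (j - 1))) :=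
      prod_mem_pow_sum _ _ _ _ (fun i _ => hu2 i)
    refine Ideal.pow_le_pow_right ?_ hmem
    refine arith_aux t s h j hj1 hjt hhs _ ?_
    rw [← hdeg]
    calc ∑ i, sz i ≤ ∑ i : Fin h, ((sz i - (j - 1)) + (j - 1)) :=
          Finset.sum_le_sum fun i _ => by omega
      _ = (∑ i, (sz i - (j - 1))) + h * (j - 1) := by
          rw [Finset.sum_add_distrib, Finset.sum_const, Finset.card_univ, Fintype.card_fin,
            smul_eq_mul]
end

section
/- Fix positive integers t ≤ m ≤ n. There exists a least integer k in the interval [0, t−1] such that (m−k)(n−k)/(t−k) ≤ (m−k−1)(n−k−1)/(t−k−1), where a positive integer divided by zero is interpreted as infinity (so the inequality holds automatically when k = t−1). For this least k, setting u = t(m+n−2k) − mn + k², one has t − k − u ≥ 0. -/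
/-- The condition `(m-k)(n-k)/(t-k) ≤ (m-k-1)(n-k-1)/(t-k-1)`, where a positive integer
divided by zero is interpreted as infinity: for `k = t-1` the right-hand side is infinite
and the condition holds automatically. -/
def minCond (t m n k : ℕ) : Prop :=
  k = t - 1 ∨
    (((m - k) * (n - k) : ℕ) : ℝ) / ((t - k : ℕ) : ℝ) ≤
      (((m - k - 1) * (n - k - 1) : ℕ) : ℝ) / ((t - k - 1 : ℕ) : ℝ)

/-- The integer `u = t(m+n-2k) - mn + k²`. -/
def uInt (t m n k : ℕ) : ℤ :=
  (t : ℤ) * ((m : ℤ) + (n : ℤ) - 2 * (k : ℤ)) - (m : ℤ) * (n : ℤ) + (k : ℤ) ^ 2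

/-- For positive integers `t ≤ m ≤ n` there is a least `k ∈ [0, t-1]` with
`(m-k)(n-k)/(t-k) ≤ (m-k-1)(n-k-1)/(t-k-1)` (division by zero read as infinity), and for
this `k`, setting `u = t(m+n-2k) - mn + k²`, one has `t - k - u ≥ 0`. -/
theorem exists_least_k_and_u_nonpos (t m n : ℕ) (ht : 0 < t) (htm : t ≤ m) (hmn : m ≤ n) :
    ∃ k : ℕ, k ≤ t - 1 ∧ minCond t m n k ∧ (∀ j : ℕ, j < k → ¬ minCond t m n j) ∧
      0 ≤ (t : ℤ) - (k : ℤ) - uInt t m n k := by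
  classical
  have hmem : minCond t m n (t - 1) := Or.inl rfl
  have hex : ∃ k, minCond t m n k := ⟨t - 1, hmem⟩
  refine ⟨Nat.find hex, Nat.find_min' hex hmem, Nat.find_spec hex,
    fun j hj => Nat.find_min hex hj, ?_⟩
  set k := Nat.find hex with hk
  have hkle : k ≤ t - 1 := Nat.find_min' hex hmem
  by_cases hkt : k = t - 1
  · -- unconditional: 1 - u(t-1) = (m-t)(n-t) ≥ 0
    rw [hkt]
    have h1 : ((t - 1 : ℕ) : ℤ) = (t : ℤ) - 1 := by
      have := Nat.one_le_iff_ne_zero.mpr ht.ne'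
      push_cast [Nat.cast_sub this]
      ring
    have hmZ : (t : ℤ) ≤ m := by exact_mod_cast htm
    have hnZ : (m : ℤ) ≤ n := by exact_mod_cast hmn
    unfold uInt
    rw [h1]
    nlinarith [mul_nonneg (sub_nonneg.mpr hmZ) (sub_nonneg.mpr (hmZ.trans hnZ))]
  · have hkc := Nat.find_spec hex
    rw [← hk] at hkc
    rcases hkc with h | hineq
    · exact absurd h hkt
    have hklt : k + 2 ≤ t := by omega
    have hkm : k + 2 ≤ m := hklt.trans htm
    have hkn : k + 2 ≤ n := hkm.trans hmn
    have h1 : (0 : ℝ) < ((t - k : ℕ) : ℝ) := by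
      have : 0 < t - k := by omega
      exact_mod_cast this
    have h2 : (0 : ℝ) < ((t - k - 1 : ℕ) : ℝ) := by
      have : 0 < t - k - 1 := by omega
      exact_mod_cast this
    rw [div_le_div_iff₀ h1 h2] at hineq
    have hN : (m - k) * (n - k) * (t - k - 1) ≤ (m - k - 1) * (n - k - 1) * (t - k) := by
      exact_mod_cast hineq
    have hZ : ((m : ℤ) - k) * ((n : ℤ) - k) * ((t : ℤ) - k - 1) ≤
        ((m : ℤ) - k - 1) * ((n : ℤ) - k - 1) * ((t : ℤ) - k) := by
      zify [show k ≤ m by omega, show k ≤ n by omega, show k ≤ t by omega,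
        show 1 ≤ m - k by omega, show 1 ≤ n - k by omega, show 1 ≤ t - k by omega] at hN
      convert hN using 2 <;> ring
    unfold uInt
    nlinarith [hZ]
end

section
/- Fix positive integers t ≤ m ≤ n, let X be an m×n matrix of indeterminates over a field 𝔽 of prime characteristic p, R = 𝔽[X] with homogeneous maximal ideal 𝔪, and let I_t be the ideal of t×t minors of X. Let k be an integer with 0 ≤ k ≤ t−1. Then there exists a nonnegative integer N such that for every q = p^e, ν_{I_t}(q) ≤ N + (q−1)(m−k)(n−k)/(t−k). -/
open MvPolynomial


/-- The bracket power `J^{[q]}`: the ideal generated by the `q`-th powers of the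
elements of `J`. -/
noncomputable def bracketPow {R : Type*} [CommRing R] (J : Ideal R) (q : ℕ) : Ideal R :=
  Ideal.span ((fun a => a ^ q) '' (J : Set R))

/-- The homogeneous maximal ideal `𝔪` of a polynomial ring, generated by the variables. -/
noncomputable def maxIdl (𝔽 : Type*) [Field 𝔽] (σ : Type*) : Ideal (MvPolynomial σ 𝔽) :=
  Ideal.span (Set.range MvPolynomial.X)

/-- `ν_I(q) = max { r ∈ ℕ | I^r ⊄ 𝔪^{[q]} }`. -/
noncomputable def nu {𝔽 σ : Type*} [Field 𝔽] (I : Ideal (MvPolynomial σ 𝔽)) (q : ℕ) : ℕ :=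
  sSup {r : ℕ | ¬ I ^ r ≤ bracketPow (maxIdl 𝔽 σ) q}


namespace NuBoundAux

open Matrix MvPolynomial



/-! ### Generic ideal-theoretic lemmas -/

theorem prod_mem_pow_card {A : Type*} [CommRing A] (I : Ideal A) {ι : Type*} [DecidableEq ι]
    (s : Finset ι) (f : ι → A) (h : ∀ i ∈ s, f i ∈ I) : (∏ i ∈ s, f i) ∈ I ^ s.card := by
  classical
  induction s using Finset.cons_induction with
  | empty => simp [Ideal.one_eq_top]
  | cons a s ha ih =>
    rw [Finset.prod_cons, Finset.card_cons, pow_succ, mul_comm (I ^ s.card) I]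
    exact Ideal.mul_mem_mul (h a (Finset.mem_cons_self a s))
      (ih (fun i hi => h i (Finset.mem_cons_of_mem hi)))

theorem det_mul_expansion {A : Type*} [CommRing A] {t : ℕ} {ι : Type*} [Fintype ι] [DecidableEq ι]
    (P : Matrix (Fin t) ι A) (W : Matrix ι (Fin t) A) :
    (P * W).det = ∑ g : Fin t → ι, (∏ i, P i (g i)) • (W.submatrix g id).det := by
  have h1 : (P * W) = Matrix.of fun i => ∑ a : ι, P i a • W a := by
    ext i j; simp [Matrix.mul_apply, Finset.sum_apply]
  rw [h1]
  show Matrix.detRowAlternating.toMultilinearMap (fun i => ∑ a : ι, P i a • W a) = _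
  rw [Matrix.detRowAlternating.toMultilinearMap.map_sum (fun i a => P i a • W a)]
  refine Finset.sum_congr rfl fun g _ => ?_
  exact Matrix.detRowAlternating.toMultilinearMap.map_smul_univ (fun i => P i (g i))
    (fun i => W (g i))

theorem det_submatrix_fromBlocks_mem {A : Type*} [CommRing A] {t k mk nk : ℕ}
    (A' : Matrix (Fin k) (Fin k) A) (G : Matrix (Fin mk) (Fin nk) A) (Js : Ideal A)
    (hG : ∀ i j, G i j ∈ Js)
    (g : Fin t → Fin k ⊕ Fin mk) (h : Fin t → Fin k ⊕ Fin nk) :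
    ((Matrix.fromBlocks A' 0 0 G).submatrix g h).det ∈ Js ^ (t - k) := by
  classical
  by_cases hinj : Function.Injective g
  · rw [Matrix.det_apply]
    refine Ideal.sum_mem _ fun σ _ => ?_
    rw [Units.smul_def, zsmul_eq_mul]
    refine Ideal.mul_mem_left _ _ ?_
    set s : Finset (Fin t) :=
      Finset.univ.filter (fun i => ¬ ∃ a, g (σ i) = Sum.inl a) with hs
    have hcard : t - k ≤ s.card := by
      have hinj2 : Function.Injective (g ∘ σ) := hinj.comp σ.injective
      have hle : (Finset.univ.filter (fun i : Fin t => ∃ a, g (σ i) = Sum.inl a)).card ≤ k := by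
        have hcs := Fintype.card_subtype (fun i : Fin t => ∃ a, g (σ i) = Sum.inl a)
        have hinj3 : Fintype.card { x : Fin t // ∃ a, g (σ x) = Sum.inl a }
            ≤ Fintype.card (Fin k) := by
          refine Fintype.card_le_of_injective (fun x => x.2.choose) ?_
          rintro ⟨x, hx⟩ ⟨y, hy⟩ hxy
          have h1 := hx.choose_spec
          have h2 := hy.choose_spec
          dsimp only at hxy
          refine Subtype.ext (hinj2 ?_)
          show g (σ x) = g (σ y)
          rw [h1, h2, hxy]
        rw [Fintype.card_fin] at hinj3
        omega
      have hcompl : sᶜ = Finset.univ.filter (fun i : Fin t => ∃ a, g (σ i) = Sum.inl a) := by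
        rw [hs]
        ext i
        simp
      have hcc : sᶜ.card = Fintype.card (Fin t) - s.card := Finset.card_compl s
      rw [Fintype.card_fin] at hcc
      have h3 : s.card ≤ t := by
        have := Finset.card_le_univ s
        rwa [Fintype.card_fin] at this
      rw [hcompl] at hcc
      omega
    have hmem : ∀ i ∈ s,
        ((Matrix.fromBlocks A' 0 0 G).submatrix g h) (σ i) i ∈ Js := by
      intro i hi
      rw [hs, Finset.mem_filter] at hi
      obtain ⟨b, hb⟩ : ∃ b, g (σ i) = Sum.inr b := by
        rcases hgsi : g (σ i) with a | b
        · exact absurd ⟨a, hgsi⟩ hi.2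
        · exact ⟨b, rfl⟩
      rw [Matrix.submatrix_apply, hb]
      rcases hhi : h i with c | c
      · have hz : (Matrix.fromBlocks A' 0 0 G) (Sum.inr b) (Sum.inl c) = 0 := rfl
        rw [hz]; exact Ideal.zero_mem _
      · have hz : (Matrix.fromBlocks A' 0 0 G) (Sum.inr b) (Sum.inr c) = G b c := rfl
        rw [hz]; exact hG b c
    have heq : (∏ i, ((Matrix.fromBlocks A' 0 0 G).submatrix g h) (σ i) i)
        = (∏ i ∈ s, ((Matrix.fromBlocks A' 0 0 G).submatrix g h) (σ i) i) *
          ∏ i ∈ sᶜ, ((Matrix.fromBlocks A' 0 0 G).submatrix g h) (σ i) i :=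
      (Finset.prod_mul_prod_compl s _).symm
    rw [heq]
    refine Ideal.pow_le_pow_right hcard ?_
    exact Ideal.mul_mem_right _ _ (prod_mem_pow_card Js s _ hmem)
  · rw [Function.not_injective_iff] at hinj
    obtain ⟨i, j, hij, hne⟩ := hinj
    have : ((Matrix.fromBlocks A' 0 0 G).submatrix g h).det = 0 :=
      Matrix.det_zero_of_row_eq hne (funext fun j' => by simp [Matrix.submatrix_apply, hij])
    rw [this]; exact Ideal.zero_mem _

theorem det_submatrix_PMQ_mem {A : Type*} [CommRing A] {t k mk nk : ℕ}
    (P : Matrix (Fin k ⊕ Fin mk) (Fin k ⊕ Fin mk) A)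
    (A' : Matrix (Fin k) (Fin k) A) (G : Matrix (Fin mk) (Fin nk) A)
    (Q : Matrix (Fin k ⊕ Fin nk) (Fin k ⊕ Fin nk) A) (Js : Ideal A)
    (hG : ∀ i j, G i j ∈ Js)
    (r : Fin t → Fin k ⊕ Fin mk) (c : Fin t → Fin k ⊕ Fin nk) :
    ((P * Matrix.fromBlocks A' 0 0 G * Q).submatrix r c).det ∈ Js ^ (t - k) := by
  classical
  set M₂ := Matrix.fromBlocks A' 0 0 G with hM₂
  have h1 : (P * M₂ * Q).submatrix r c
      = (P.submatrix r id) * ((M₂ * Q.submatrix id c)) := by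
    rw [Matrix.mul_assoc]
    rw [Matrix.submatrix_mul (e₂ := id) P (M₂ * Q) r c Function.bijective_id,
      Matrix.submatrix_mul (e₂ := id) M₂ Q id c Function.bijective_id,
      Matrix.submatrix_id_id]
  rw [h1, det_mul_expansion]
  refine Ideal.sum_mem _ fun g _ => Submodule.smul_mem _ _ ?_
  have h2 : (M₂ * Q.submatrix id c).submatrix g id
      = (M₂.submatrix g id) * (Q.submatrix id c) := by
    have := Matrix.submatrix_mul (e₂ := id) M₂ (Q.submatrix id c) g id Function.bijective_id
    rw [this, Matrix.submatrix_id_id]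
  rw [h2, ← Matrix.det_transpose, Matrix.transpose_mul, det_mul_expansion]
  refine Ideal.sum_mem _ fun h' _ => Submodule.smul_mem _ _ ?_
  have h3 : (M₂.submatrix g id).transpose.submatrix h' id
      = (M₂.submatrix g h').transpose := by
    ext i j
    simp [Matrix.transpose_apply, Matrix.submatrix_apply]
  rw [h3, Matrix.det_transpose]
  exact det_submatrix_fromBlocks_mem A' G Js hG g h'

/-! ### Saturation -/

def sat {A : Type*} [CommRing A] (u : A) (Jd : Ideal A) : Ideal A where
  carrier := {x | ∃ N, u ^ N * x ∈ Jd}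
  add_mem' := by
    rintro a b ⟨Na, ha⟩ ⟨Nb, hb⟩
    refine ⟨Na + Nb, ?_⟩
    rw [mul_add]
    refine Ideal.add_mem _ ?_ ?_
    · rw [pow_add, mul_comm (u ^ Na), mul_assoc]
      exact Ideal.mul_mem_left _ _ ha
    · rw [pow_add, mul_assoc]
      exact Ideal.mul_mem_left _ _ hb
  zero_mem' := ⟨0, by simp⟩
  smul_mem' := by
    rintro c x ⟨N, hx⟩
    refine ⟨N, ?_⟩
    rw [smul_eq_mul, mul_comm c x, ← mul_assoc]
    exact Ideal.mul_mem_right _ _ hx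

theorem pow_le_sat {A : Type*} [CommRing A] {u : A} {I Jd : Ideal A}
    (h : I ≤ sat u Jd) (r : ℕ) : I ^ r ≤ sat u (Jd ^ r) := by
  induction r with
  | zero =>
    intro x _
    exact ⟨0, by simp [Ideal.one_eq_top]⟩
  | succ r ih =>
    rw [pow_succ, pow_succ]
    refine Ideal.mul_le.mpr fun a ha b hb => ?_
    obtain ⟨Na, hNa⟩ := ih ha
    obtain ⟨Nb, hNb⟩ := h hb
    refine ⟨Na + Nb, ?_⟩
    have : u ^ (Na + Nb) * (a * b) = (u ^ Na * a) * (u ^ Nb * b) := by ring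
    rw [this]
    exact Ideal.mul_mem_mul hNa hNb

/-! ### Pigeonhole for powers of a finitely generated ideal -/

theorem span_pow_le_qpow {A : Type*} [CommRing A] {ι : Type*} [Fintype ι] [DecidableEq ι]
    (y : ι → A) (q s : ℕ) (hs : Fintype.card ι * (q - 1) < s) :
    (Ideal.span (Set.range y)) ^ s ≤ Ideal.span (Set.range fun i => y i ^ q) := by
  classical
  have main : ∀ s : ℕ, (Ideal.span (Set.range y)) ^ s ≤
      Ideal.span {z | ∃ d : ι → ℕ, (∑ i, d i) = s ∧ z = ∏ i, y i ^ d i} := by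
    intro s
    induction s with
    | zero =>
      have h1 : (1 : A) ∈ Ideal.span {z | ∃ d : ι → ℕ, (∑ i, d i) = 0 ∧ z = ∏ i, y i ^ d i} :=
        Ideal.subset_span ⟨fun _ => 0, by simp, by simp⟩
      have htop : Ideal.span {z | ∃ d : ι → ℕ, (∑ i, d i) = 0 ∧ z = ∏ i, y i ^ d i} = ⊤ :=
        (Ideal.eq_top_iff_one _).mpr h1
      rw [pow_zero, Ideal.one_eq_top, htop]
    | succ s ih =>
      rw [pow_succ]
      refine le_trans (Ideal.mul_mono ih le_rfl) ?_
      rw [Ideal.span_mul_span]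
      rw [Ideal.span_le]
      rintro z hz
      simp only [Set.mem_mul] at hz
      obtain ⟨zs, ⟨d, hd, rfl⟩, yt, ⟨i, rfl⟩, rfl⟩ := hz
      refine Ideal.subset_span ⟨Function.update d i (d i + 1), ?_, ?_⟩
      · rw [Finset.sum_update_of_mem (Finset.mem_univ i), Finset.sdiff_singleton_eq_erase]
        have h2 : (∑ j ∈ Finset.univ.erase i, d j) + d i = s := by
          rw [Finset.sum_erase_add _ _ (Finset.mem_univ i)]; exact hd
        omega
      · have hup : ∏ j, y j ^ (Function.update d i (d i + 1) j)
            = (∏ j ∈ Finset.univ.erase i, y j ^ d j) * y i ^ (d i + 1) := by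
          rw [← Finset.prod_erase_mul _ _ (Finset.mem_univ i), Function.update_self]
          congr 1
          exact Finset.prod_congr rfl (fun j hj => by
            rw [Function.update_of_ne (Finset.ne_of_mem_erase hj)])
        have hdown : ∏ j, y j ^ d j
            = (∏ j ∈ Finset.univ.erase i, y j ^ d j) * y i ^ d i :=
          (Finset.prod_erase_mul _ _ (Finset.mem_univ i)).symm
        rw [hup, hdown, pow_succ]
        ring
  refine (main s).trans (Ideal.span_le.mpr ?_)
  rintro z ⟨d, hd, rfl⟩
  have hex : ∃ i, q ≤ d i := by
    by_contra hc
    push_neg at hc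
    have hb : ∑ i, d i ≤ Fintype.card ι * (q - 1) := by
      calc ∑ i, d i ≤ ∑ _i : ι, (q - 1) :=
            Finset.sum_le_sum (fun i _ => by have := hc i; omega)
        _ = Fintype.card ι * (q - 1) := by
            rw [Finset.sum_const, Finset.card_univ, smul_eq_mul]
    omega
  obtain ⟨i, hi⟩ := hex
  obtain ⟨cc, hcc⟩ : ∃ cc, d i = q + cc := ⟨d i - q, by omega⟩
  have hsplit : ∏ j, y j ^ d j
      = y i ^ q * (y i ^ cc * ∏ j ∈ Finset.univ.erase i, y j ^ d j) := by
    have hdown : ∏ j, y j ^ d j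
        = (∏ j ∈ Finset.univ.erase i, y j ^ d j) * y i ^ d i :=
      (Finset.prod_erase_mul _ _ (Finset.mem_univ i)).symm
    rw [hdown, hcc, pow_add]
    ring
  rw [hsplit]
  exact Ideal.mul_mem_right _ _ (Ideal.subset_span ⟨i, rfl⟩)



/-! ### The generic matrix in block form -/

/-- Order-compatible identification `Fin k ⊕ Fin (N - k) ≃ Fin N`. -/
def rhoE (N k : ℕ) (h : k ≤ N) : (Fin k ⊕ Fin (N - k)) ≃ Fin N :=
  finSumFinEquiv.trans (finCongr (Nat.add_sub_cancel' h))

theorem rhoE_val_inl {N k : ℕ} (h : k ≤ N) (i : Fin k) :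
    ((rhoE N k h) (Sum.inl i) : ℕ) = (i : ℕ) := by
  simp [rhoE]

theorem rhoE_val_inr {N k : ℕ} (h : k ≤ N) (i : Fin (N - k)) :
    ((rhoE N k h) (Sum.inr i) : ℕ) = k + (i : ℕ) := by
  simp [rhoE]

variable (𝔽 : Type*) [Field 𝔽]

/-- The generic matrix, reindexed into block form with top-left `k × k` block. -/
noncomputable def Xblk (m n k : ℕ) (hm : k ≤ m) (hn : k ≤ n) :
    Matrix (Fin k ⊕ Fin (m - k)) (Fin k ⊕ Fin (n - k)) (MvPolynomial (Fin m × Fin n) 𝔽) :=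
  (genMat 𝔽 m n).submatrix (rhoE m k hm) (rhoE n k hn)

/-- The top-left `k × k` minor. -/
noncomputable def uDet (m n k : ℕ) (hm : k ≤ m) (hn : k ≤ n) :
    MvPolynomial (Fin m × Fin n) 𝔽 :=
  ((Xblk 𝔽 m n k hm hn).submatrix Sum.inl Sum.inl).det

/-- The bordered `(k+1) × (k+1)` minors. -/
noncomputable def Ymin (m n k : ℕ) (hm : k ≤ m) (hn : k ≤ n)
    (i : Fin (m - k)) (j : Fin (n - k)) : MvPolynomial (Fin m × Fin n) 𝔽 :=
  ((Xblk 𝔽 m n k hm hn).submatrix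
      (Sum.elim Sum.inl (fun _ : Fin 1 => Sum.inr i))
      (Sum.elim Sum.inl (fun _ : Fin 1 => Sum.inr j))).det

/-- The ideal generated by the bordered minors. -/
noncomputable def Jbrd (m n k : ℕ) (hm : k ≤ m) (hn : k ≤ n) :
    Ideal (MvPolynomial (Fin m × Fin n) 𝔽) :=
  Ideal.span (Set.range fun ij : Fin (m - k) × Fin (n - k) => Ymin 𝔽 m n k hm hn ij.1 ij.2)

theorem uDet_ne_zero (m n k : ℕ) (hm : k ≤ m) (hn : k ≤ n) :
    uDet 𝔽 m n k hm hn ≠ 0 := by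
  intro h0
  have hev := congrArg
    (MvPolynomial.eval (fun v : Fin m × Fin n => if (v.1 : ℕ) = (v.2 : ℕ) then (1 : 𝔽) else 0)) h0
  rw [map_zero] at hev
  rw [uDet, RingHom.map_det] at hev
  have hmat : (MvPolynomial.eval
        (fun v : Fin m × Fin n => if (v.1 : ℕ) = (v.2 : ℕ) then (1 : 𝔽) else 0)).mapMatrix
        ((Xblk 𝔽 m n k hm hn).submatrix Sum.inl Sum.inl) = (1 : Matrix (Fin k) (Fin k) 𝔽) := by
    ext i j
    simp only [RingHom.mapMatrix_apply, Matrix.map_apply, Matrix.submatrix_apply,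
      Xblk, genMat, Matrix.of_apply, MvPolynomial.eval_X, Matrix.one_apply]
    rw [rhoE_val_inl hm i, rhoE_val_inl hn j]
    by_cases hij : (i : ℕ) = (j : ℕ)
    · rw [if_pos hij, if_pos (Fin.val_injective hij)]
    · rw [if_neg hij, if_neg (fun h => hij (by rw [h]))]
  rw [hmat, Matrix.det_one] at hev
  exact one_ne_zero hev

set_option maxHeartbeats 1000000 in
theorem minor_sat (m n k t : ℕ) (hm : k ≤ m) (hn : k ≤ n)
    (row : Fin t → Fin m) (col : Fin t → Fin n) :
    ∃ N : ℕ, uDet 𝔽 m n k hm hn ^ N * ((genMat 𝔽 m n).submatrix row col).det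
      ∈ (Jbrd 𝔽 m n k hm hn) ^ (t - k) := by
  classical
  set R := MvPolynomial (Fin m × Fin n) 𝔽
  set u : R := uDet 𝔽 m n k hm hn with hu_def
  have hu : u ≠ 0 := uDet_ne_zero 𝔽 m n k hm hn
  set S := Localization.Away u
  let φ : R →+* S := algebraMap R S
  set Xb := Xblk 𝔽 m n k hm hn with hXb
  set Xb' : Matrix (Fin k ⊕ Fin (m - k)) (Fin k ⊕ Fin (n - k)) S := Xb.map φ with hXb'
  set A' : Matrix (Fin k) (Fin k) S := Xb'.submatrix Sum.inl Sum.inl with hA'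
  set B' : Matrix (Fin k) (Fin (n - k)) S := Xb'.submatrix Sum.inl Sum.inr with hB'
  set C' : Matrix (Fin (m - k)) (Fin k) S := Xb'.submatrix Sum.inr Sum.inl with hC'
  set D' : Matrix (Fin (m - k)) (Fin (n - k)) S := Xb'.submatrix Sum.inr Sum.inr with hD'
  have hdetA' : A'.det = φ u := by
    have h1 : A' = φ.mapMatrix (Xb.submatrix Sum.inl Sum.inl) := by
      rw [hA', hXb', Matrix.submatrix_map]
      rfl
    rw [h1, ← RingHom.map_det]
    rfl
  have hunit : IsUnit (φ u) :=
    IsLocalization.map_units S ⟨u, Submonoid.mem_powers u⟩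
  haveI : Invertible A' := Matrix.invertibleOfIsUnitDet A' (hdetA' ▸ hunit)
  set G : Matrix (Fin (m - k)) (Fin (n - k)) S := D' - C' * (⅟A' * B') with hG_def
  -- Schur complement identity for the bordered minors
  have hSchur : ∀ (i : Fin (m - k)) (j : Fin (n - k)),
      φ (Ymin 𝔽 m n k hm hn i j) = φ u * G i j := by
    intro i j
    rw [Ymin, RingHom.map_det]
    have hblk : (φ.mapMatrix
        (Xb.submatrix (Sum.elim Sum.inl (fun _ : Fin 1 => Sum.inr i))
          (Sum.elim Sum.inl (fun _ : Fin 1 => Sum.inr j))))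
        = Matrix.fromBlocks A' (Matrix.of fun a (_ : Fin 1) => B' a j)
            (Matrix.of fun (_ : Fin 1) b => C' i b)
            (Matrix.of fun (_ : Fin 1) (_ : Fin 1) => D' i j) := by
      ext a b
      rcases a with a | a <;> rcases b with b | b <;>
        simp [Matrix.fromBlocks, RingHom.mapMatrix_apply, Matrix.map_apply,
          Matrix.submatrix_apply, hA', hB', hC', hD', hXb']
    rw [hblk, Matrix.det_fromBlocks₁₁, hdetA', Matrix.det_fin_one]
    congr 1
    simp only [Matrix.sub_apply, Matrix.of_apply, hG_def]
    congr 1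
    simp only [Matrix.mul_apply, Matrix.of_apply, Finset.mul_sum, Finset.sum_mul]
    exact congrFun (congrFun (Matrix.mul_assoc C' (⅟A') B') i) j
  -- the span of the entries of G
  set Js : Ideal S := Ideal.span (Set.range fun ij : Fin (m - k) × Fin (n - k) => G ij.1 ij.2)
    with hJs
  have hGmem : ∀ i j, G i j ∈ Js := fun i j => Ideal.subset_span ⟨(i, j), rfl⟩
  have hJsle : Js ≤ Ideal.map φ (Jbrd 𝔽 m n k hm hn) := by
    rw [hJs, Ideal.span_le]
    rintro z ⟨⟨i, j⟩, rfl⟩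
    have h1 : φ u * G i j ∈ Ideal.map φ (Jbrd 𝔽 m n k hm hn) := by
      rw [← hSchur i j]
      exact Ideal.mem_map_of_mem φ (Ideal.subset_span ⟨(i, j), rfl⟩)
    have h2 : (↑hunit.unit⁻¹ : S) * (φ u * G i j) ∈ Ideal.map φ (Jbrd 𝔽 m n k hm hn) :=
      Ideal.mul_mem_left _ _ h1
    rwa [← mul_assoc, IsUnit.val_inv_mul, one_mul] at h2
  -- block decomposition Xb' = P * M₂ * Q
  set P : Matrix (Fin k ⊕ Fin (m - k)) (Fin k ⊕ Fin (m - k)) S :=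
    Matrix.fromBlocks 1 0 (C' * ⅟A') 1 with hP
  set Q : Matrix (Fin k ⊕ Fin (n - k)) (Fin k ⊕ Fin (n - k)) S :=
    Matrix.fromBlocks 1 (⅟A' * B') 0 1 with hQ
  have hXbblocks : Xb' = Matrix.fromBlocks A' B' C' D' := by
    ext a b
    rcases a with a | a <;> rcases b with b | b <;> rfl
  have hPMQ : Xb' = P * Matrix.fromBlocks A' 0 0 G * Q := by
    rw [hXbblocks, hP, hQ, Matrix.fromBlocks_multiply, Matrix.fromBlocks_multiply]
    rw [Matrix.fromBlocks_inj]
    refine ⟨?_, ?_, ?_, ?_⟩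
    · simp
    · simp [← Matrix.mul_assoc]
    · simp [Matrix.mul_assoc]
    · simp only [Matrix.mul_assoc, invOf_mul_self, Matrix.mul_one, Matrix.one_mul,
        Matrix.mul_zero, Matrix.zero_mul, add_zero, zero_add, mul_invOf_self]
      rw [hG_def]
      abel
  -- the minor, in the localization, lies in (Js)^(t-k)
  set r' : Fin t → Fin k ⊕ Fin (m - k) := fun i => (rhoE m k hm).symm (row i)
  set c' : Fin t → Fin k ⊕ Fin (n - k) := fun i => (rhoE n k hn).symm (col i)
  have hminor : (genMat 𝔽 m n).submatrix row col = Xb.submatrix r' c' := by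
    ext i j
    simp [hXb, Xblk, Matrix.submatrix_apply, r', c', Equiv.apply_symm_apply]
  have hmem : φ (((genMat 𝔽 m n).submatrix row col).det)
      ∈ Ideal.map φ ((Jbrd 𝔽 m n k hm hn) ^ (t - k)) := by
    rw [hminor, RingHom.map_det]
    have : φ.mapMatrix (Xb.submatrix r' c') = Xb'.submatrix r' c' := by
      ext i j
      simp [RingHom.mapMatrix_apply, Matrix.map_apply, Matrix.submatrix_apply, hXb']
    rw [this, hPMQ]
    rw [Ideal.map_pow]
    refine SetLike.le_def.mp (Ideal.pow_right_mono hJsle (t-k)) ?_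
    exact det_submatrix_PMQ_mem P A' G Q Js hGmem r' c'
  rw [IsLocalization.mem_map_algebraMap_iff (Submonoid.powers u) S] at hmem
  obtain ⟨⟨j, s⟩, hjs⟩ := hmem
  obtain ⟨N, hN⟩ := s.2
  refine ⟨N, ?_⟩
  have hinj : Function.Injective φ :=
    IsLocalization.injective S (powers_le_nonZeroDivisors_of_noZeroDivisors hu)
  have : φ (((genMat 𝔽 m n).submatrix row col).det * u ^ N) = φ (j : R) := by
    have hN' : u ^ N = (s : R) := hN
    rw [_root_.map_mul, hN']
    simpa using hjs
  have heq := hinj this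
  rw [mul_comm] at heq
  rw [heq]
  exact j.2



/-! ### Frobenius descent machinery -/

section Lam

variable {𝔽 : Type*} [Field 𝔽] {σ : Type*} [DecidableEq σ]

/-- Auxiliary weight function. -/
noncomputable def wfun (q : ℕ) (α : σ →₀ ℕ) (ψ : MvPolynomial σ 𝔽 →ₐ[𝔽] Polynomial 𝔽)
    (γ : σ →₀ ℕ) : Polynomial 𝔽 :=
  if γ.mapRange (· % q) (Nat.zero_mod q) = α then
    ψ (monomial (γ.mapRange (· / q) (Nat.zero_div q)) 1) else 0

/-- A Cartier-type linear functional. -/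
noncomputable def Lam (q : ℕ) (α : σ →₀ ℕ) (ψ : MvPolynomial σ 𝔽 →ₐ[𝔽] Polynomial 𝔽)
    (f : MvPolynomial σ 𝔽) : Polynomial 𝔽 :=
  ∑ γ ∈ f.support, f.coeff γ • wfun q α ψ γ

variable (q : ℕ) (α : σ →₀ ℕ) (ψ : MvPolynomial σ 𝔽 →ₐ[𝔽] Polynomial 𝔽)

theorem Lam_eq_sum_subset {f : MvPolynomial σ 𝔽} {s : Finset (σ →₀ ℕ)} (hs : f.support ⊆ s) :
    Lam q α ψ f = ∑ γ ∈ s, f.coeff γ • wfun q α ψ γ := by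
  rw [Lam]
  exact Finset.sum_subset hs (fun γ _ hγ => by
    rw [MvPolynomial.notMem_support_iff.mp hγ, zero_smul])

theorem Lam_add (f g : MvPolynomial σ 𝔽) :
    Lam q α ψ (f + g) = Lam q α ψ f + Lam q α ψ g := by
  classical
  rw [Lam_eq_sum_subset q α ψ
      (MvPolynomial.support_add : (f + g).support ⊆ f.support ∪ g.support),
    Lam_eq_sum_subset q α ψ (Finset.subset_union_left : f.support ⊆ f.support ∪ g.support),
    Lam_eq_sum_subset q α ψ (Finset.subset_union_right : g.support ⊆ f.support ∪ g.support),
    ← Finset.sum_add_distrib]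
  refine Finset.sum_congr rfl fun γ _ => ?_
  rw [MvPolynomial.coeff_add, add_smul]

theorem Lam_zero : Lam q α ψ 0 = 0 := by simp [Lam]

/-- `Lam` as an additive monoid homomorphism. -/
noncomputable def LamHom : MvPolynomial σ 𝔽 →+ Polynomial 𝔽 where
  toFun := Lam q α ψ
  map_zero' := Lam_zero q α ψ
  map_add' := Lam_add q α ψ

theorem Lam_monomial (γ : σ →₀ ℕ) (c : 𝔽) :
    Lam q α ψ (monomial γ c) = c • wfun q α ψ γ := by
  classical
  by_cases hc : c = 0
  · simp [hc, Lam_zero]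
  · rw [Lam]
    rw [MvPolynomial.support_monomial]
    rw [if_neg hc, Finset.sum_singleton, MvPolynomial.coeff_monomial, if_pos rfl]

theorem Phi_monomial (hq : 0 < q) (β : σ →₀ ℕ) (b : 𝔽) :
    (aeval fun v => (X v : MvPolynomial σ 𝔽) ^ q) (monomial β b) = monomial (q • β) b := by
  rw [aeval_monomial, monomial_eq]
  have halg : algebraMap 𝔽 (MvPolynomial σ 𝔽) b = C b := rfl
  rw [halg]
  congr 1
  have hmap : q • β = β.mapRange (q * ·) (by simp) := by
    ext v
    simp [Finsupp.mapRange_apply, Finsupp.smul_apply, mul_comm]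
  rw [hmap, Finsupp.prod_mapRange_index (fun a => pow_zero _)]
  exact Finsupp.prod_congr fun v _ => (pow_mul _ q _).symm

theorem wfun_shift (hq : 0 < q) (β γ : σ →₀ ℕ) :
    wfun q α ψ (q • β + γ) = ψ (monomial β 1) * wfun q α ψ γ := by
  have hmod : (q • β + γ).mapRange (· % q) (Nat.zero_mod q)
      = γ.mapRange (· % q) (Nat.zero_mod q) := by
    ext v
    simp only [Finsupp.mapRange_apply, Finsupp.add_apply, Finsupp.smul_apply, smul_eq_mul]
    exact Nat.mul_add_mod q (β v) (γ v)
  have hdiv : (q • β + γ).mapRange (· / q) (Nat.zero_div q)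
      = β + γ.mapRange (· / q) (Nat.zero_div q) := by
    ext v
    simp only [Finsupp.mapRange_apply, Finsupp.add_apply, Finsupp.smul_apply, smul_eq_mul]
    exact Nat.mul_add_div hq (β v) (γ v)
  rw [wfun, wfun, hmod, hdiv]
  by_cases hc : γ.mapRange (· % q) (Nat.zero_mod q) = α
  · rw [if_pos hc, if_pos hc, ← _root_.map_mul, MvPolynomial.monomial_mul, one_mul]
  · rw [if_neg hc, if_neg hc, mul_zero]

theorem Lam_phi_mul (hq : 0 < q) (g x : MvPolynomial σ 𝔽) :
    Lam q α ψ ((aeval fun v => (X v : MvPolynomial σ 𝔽) ^ q) g * x)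
      = ψ g * Lam q α ψ x := by
  induction g using MvPolynomial.induction_on' with
  | add g₁ g₂ ih₁ ih₂ =>
    rw [_root_.map_add, add_mul, Lam_add, ih₁, ih₂, _root_.map_add, add_mul]
  | monomial β b =>
    induction x using MvPolynomial.induction_on' with
    | add x₁ x₂ ih₁ ih₂ =>
      rw [mul_add, Lam_add, ih₁, ih₂, Lam_add, mul_add]
    | monomial γ c =>
      rw [Phi_monomial q hq, MvPolynomial.monomial_mul, Lam_monomial, Lam_monomial,
        wfun_shift q α ψ hq]
      have hb : (monomial β b : MvPolynomial σ 𝔽) = b • monomial β 1 := by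
        rw [MvPolynomial.smul_monomial, smul_eq_mul, mul_one]
      rw [hb, _root_.map_smul]
      rw [smul_mul_smul_comm]
  
theorem coeff_zero_wfun (hq : 0 < q) (hα : ∀ v, α v < q)
    (hψ : ∀ v, Polynomial.eval 0 (ψ (X v)) = 0) (γ : σ →₀ ℕ) :
    (wfun q α ψ γ).coeff 0 = if γ = α then 1 else 0 := by
  classical
  rw [wfun]
  by_cases h1 : γ.mapRange (· % q) (Nat.zero_mod q) = α
  · rw [if_pos h1, Polynomial.coeff_zero_eq_eval_zero]
    by_cases h2 : γ.mapRange (· / q) (Nat.zero_div q) = 0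
    · have hγα : γ = α := by
        ext v
        have hv1 : γ v % q = α v := by
          have := congrArg (fun f => f v) h1
          simpa [Finsupp.mapRange_apply] using this
        have hv2 : γ v / q = 0 := by
          have := congrArg (fun f => f v) h2
          simpa [Finsupp.mapRange_apply] using this
        have hdm := Nat.div_add_mod (γ v) q
        rw [hv2] at hdm
        omega
      rw [if_pos hγα, h2]
      simp
    · have hne : γ ≠ α := by
        intro h
        apply h2
        subst h
        ext v
        simp [Finsupp.mapRange_apply, Nat.div_eq_of_lt (hα v)]
      rw [if_neg hne]
      obtain ⟨v, hv⟩ : ∃ v, (γ.mapRange (· / q) (Nat.zero_div q)) v ≠ 0 := by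
        by_contra hno
        push_neg at hno
        exact h2 (Finsupp.ext hno)
      rw [monomial_eq, MvPolynomial.C_1, _root_.map_mul, _root_.map_one, one_mul]
      have hprod : Polynomial.eval 0
            (ψ ((γ.mapRange (· / q) (Nat.zero_div q)).prod fun nn e => X nn ^ e))
          = ∏ v ∈ (γ.mapRange (· / q) (Nat.zero_div q)).support,
              Polynomial.eval 0 (ψ (X v)) ^ ((γ.mapRange (· / q) (Nat.zero_div q)) v) := by
        rw [Finsupp.prod, _root_.map_prod, Polynomial.eval_prod]
        exact Finset.prod_congr rfl fun v _ => by rw [map_pow, Polynomial.eval_pow]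
      rw [hprod]
      exact Finset.prod_eq_zero (Finsupp.mem_support_iff.mpr hv) (by rw [hψ v, zero_pow hv])
  · rw [if_neg h1]
    have hne : γ ≠ α := by
      intro h
      apply h1
      subst h
      ext v
      simp [Finsupp.mapRange_apply, Nat.mod_eq_of_lt (hα v)]
    rw [if_neg hne, Polynomial.coeff_zero]

end Lam



theorem mem_bracketPow_of_support {𝔽 : Type*} [Field 𝔽] {σ : Type*} (q : ℕ)
    (x : MvPolynomial σ 𝔽) (h : ∀ α ∈ x.support, ∃ v, q ≤ α v) :
    x ∈ bracketPow (maxIdl 𝔽 σ) q := by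
  classical
  rw [← MvPolynomial.support_sum_monomial_coeff x]
  refine Ideal.sum_mem _ fun α hα => ?_
  obtain ⟨v, hv⟩ := h α hα
  have hsingle : Finsupp.single v q ≤ α := Finsupp.single_le_iff.mpr hv
  have heq : (monomial α) (x.coeff α)
      = X v ^ q * (monomial (α - Finsupp.single v q)) (x.coeff α) := by
    rw [MvPolynomial.X_pow_eq_monomial, MvPolynomial.monomial_mul, one_mul,
      add_tsub_cancel_of_le hsingle]
  rw [heq]
  refine Ideal.mul_mem_right _ _ ?_
  exact Ideal.subset_span ⟨X v, Ideal.subset_span ⟨v, rfl⟩, rfl⟩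

set_option maxHeartbeats 1000000 in
theorem step3 {𝔽 : Type*} [Field 𝔽] (p : ℕ) (hp : p.Prime) [CharP 𝔽 p] (e : ℕ)
    (m n k : ℕ) (hm : k ≤ m) (hn : k ≤ n)
    (x : MvPolynomial (Fin m × Fin n) 𝔽) (N : ℕ)
    (hx : uDet 𝔽 m n k hm hn ^ (p ^ e * N) * x ∈
      Ideal.span (Set.range fun ij : Fin (m - k) × Fin (n - k) =>
        Ymin 𝔽 m n k hm hn ij.1 ij.2 ^ (p ^ e))) :
    x ∈ bracketPow (maxIdl 𝔽 (Fin m × Fin n)) (p ^ e) := by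
  classical
  have hq : 0 < p ^ e := pow_pos hp.pos e
  haveI : Fact p.Prime := ⟨hp⟩
  haveI : CharP (MvPolynomial (Fin m × Fin n) 𝔽) p :=
    charP_of_injective_ringHom (MvPolynomial.C_injective (Fin m × Fin n) 𝔽) p
  refine mem_bracketPow_of_support (p ^ e) x ?_
  intro α hαsupp
  by_contra hno
  push_neg at hno
  set q := p ^ e with hq_def
  -- the evaluation map ψ
  set ψ : MvPolynomial (Fin m × Fin n) 𝔽 →ₐ[𝔽] Polynomial 𝔽 :=
    aeval (fun v : Fin m × Fin n =>
      if (v.1 : ℕ) = (v.2 : ℕ) ∧ (v.1 : ℕ) < k then (Polynomial.X : Polynomial 𝔽) else 0)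
    with hψ_def
  have hψ0 : ∀ v : Fin m × Fin n, Polynomial.eval 0 (ψ (X v)) = 0 := by
    intro v
    rw [hψ_def, aeval_X]
    split_ifs <;> simp
  -- Frobenius on determinants of matrices of variables
  have hfrob : ∀ {ι : Type} [Fintype ι] [DecidableEq ι]
      (M : Matrix ι ι (MvPolynomial (Fin m × Fin n) 𝔽))
      (_ : ∀ i j, ∃ v, M i j = X v),
      M.det ^ q = (aeval fun v => (X v : MvPolynomial (Fin m × Fin n) 𝔽) ^ q) M.det := by
    intro ι _ _ M hM
    have h1 : M.det ^ q = (iterateFrobenius (MvPolynomial (Fin m × Fin n) 𝔽) p e) M.det := by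
      rw [iterateFrobenius_def]
    rw [h1, RingHom.map_det, AlgHom.map_det]
    congr 1
    ext i j
    obtain ⟨v, hv⟩ := hM i j
    simp [RingHom.mapMatrix_apply, AlgHom.mapMatrix_apply, Matrix.map_apply, hv,
      iterateFrobenius_def, aeval_X, hq_def]
  have hYq : ∀ i j, Ymin 𝔽 m n k hm hn i j ^ q
      = (aeval fun v => (X v : MvPolynomial (Fin m × Fin n) 𝔽) ^ q)
          (Ymin 𝔽 m n k hm hn i j) := by
    intro i j
    exact hfrob _ (fun a b => ⟨_, rfl⟩)
  have huq : uDet 𝔽 m n k hm hn ^ q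
      = (aeval fun v => (X v : MvPolynomial (Fin m × Fin n) 𝔽) ^ q) (uDet 𝔽 m n k hm hn) :=
    hfrob _ (fun a b => ⟨_, rfl⟩)
  -- ψ kills the bordered minors
  have hψY : ∀ i j, ψ (Ymin 𝔽 m n k hm hn i j) = 0 := by
    intro i j
    rw [Ymin, AlgHom.map_det ψ]
    apply Matrix.det_eq_zero_of_column_eq_zero (Sum.inr 0)
    intro a
    show ψ (X (rhoE m k hm ((Sum.elim Sum.inl fun _ : Fin 1 => Sum.inr i) a),
        rhoE n k hn (Sum.inr j))) = 0
    rw [hψ_def, aeval_X]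
    split_ifs with hcond
    · exfalso
      dsimp only at hcond
      rcases a with a | a
      · rw [Sum.elim_inl] at hcond
        rw [rhoE_val_inl hm, rhoE_val_inr hn] at hcond
        omega
      · rw [Sum.elim_inr] at hcond
        rw [rhoE_val_inr hm, rhoE_val_inr hn] at hcond
        omega
    · rfl
  -- ψ of the corner minor
  have hψu : ψ (uDet 𝔽 m n k hm hn) = Polynomial.X ^ k := by
    rw [uDet, AlgHom.map_det ψ]
    have hdiag : ψ.mapMatrix ((Xblk 𝔽 m n k hm hn).submatrix Sum.inl Sum.inl)
        = Matrix.diagonal (fun _ : Fin k => (Polynomial.X : Polynomial 𝔽)) := by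
      refine Matrix.ext fun i j => ?_
      show ψ (X (rhoE m k hm (Sum.inl i), rhoE n k hn (Sum.inl j))) = _
      rw [hψ_def, aeval_X]
      simp only [rhoE_val_inl hm, rhoE_val_inl hn]
      by_cases hij : i = j
      · subst hij
        rw [if_pos ⟨rfl, i.isLt⟩, Matrix.diagonal_apply_eq]
      · rw [if_neg, Matrix.diagonal_apply_ne _ hij]
        intro hcon
        exact hij (Fin.val_injective hcon.1)
    rw [hdiag, Matrix.det_diagonal, Finset.prod_const, Finset.card_univ, Fintype.card_fin]
  -- expand the span membership
  obtain ⟨cf, hcf⟩ := (Submodule.mem_span_range_iff_exists_fun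
    (MvPolynomial (Fin m × Fin n) 𝔽)).mp hx
  -- apply Λ
  have happly := congrArg (Lam q α ψ) hcf
  have hLsum : Lam q α ψ (∑ ij : Fin (m - k) × Fin (n - k),
        cf ij • Ymin 𝔽 m n k hm hn ij.1 ij.2 ^ q)
      = ∑ ij : Fin (m - k) × Fin (n - k),
        Lam q α ψ (cf ij • Ymin 𝔽 m n k hm hn ij.1 ij.2 ^ q) :=
    map_sum (LamHom q α ψ) _ Finset.univ
  have hterm : ∀ ij : Fin (m - k) × Fin (n - k),
      Lam q α ψ (cf ij • Ymin 𝔽 m n k hm hn ij.1 ij.2 ^ q) = 0 := by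
    intro ij
    rw [smul_eq_mul, mul_comm, hYq]
    rw [Lam_phi_mul q α ψ hq]
    rw [hψY, zero_mul]
  have hlhs : Lam q α ψ (uDet 𝔽 m n k hm hn ^ (q * N) * x)
      = Polynomial.X ^ (k * N) * Lam q α ψ x := by
    have hpow : uDet 𝔽 m n k hm hn ^ (q * N)
        = (aeval fun v => (X v : MvPolynomial (Fin m × Fin n) 𝔽) ^ q)
            (uDet 𝔽 m n k hm hn ^ N) := by
      rw [map_pow, ← huq, ← pow_mul]
    rw [hpow, Lam_phi_mul q α ψ hq, map_pow, hψu, ← pow_mul]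
  rw [hLsum, Finset.sum_congr rfl (fun ij _ => hterm ij), Finset.sum_const_zero, hlhs] at happly
  have hLx : Lam q α ψ x = 0 := by
    rcases mul_eq_zero.mp happly.symm with hc | hc
    · exact absurd hc (pow_ne_zero _ Polynomial.X_ne_zero)
    · exact hc
  -- extract the coefficient
  have hcoeff : (Lam q α ψ x).coeff 0 = x.coeff α := by
    rw [Lam, Polynomial.finset_sum_coeff]
    have hterm2 : ∀ γ ∈ x.support,
        (x.coeff γ • wfun q α ψ γ).coeff 0 = if γ = α then x.coeff γ else 0 := by
      intro γ _
      rw [Polynomial.coeff_smul, coeff_zero_wfun q α ψ hq hno hψ0, smul_eq_mul]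
      split_ifs <;> simp
    rw [Finset.sum_congr rfl hterm2, Finset.sum_ite_eq' x.support α (fun γ => x.coeff γ),
      if_pos hαsupp]
  rw [hLx, Polynomial.coeff_zero] at hcoeff
  exact (MvPolynomial.mem_support_iff.mp hαsupp) hcoeff.symm


end NuBoundAux

set_option maxHeartbeats 1000000 in
/-- For `0 ≤ k ≤ t-1` there is an `N ∈ ℕ` such that for every `q = p^e`,
`ν_{I_t}(q) ≤ N + (q-1)(m-k)(n-k)/(t-k)`. -/
theorem nu_le_bound (p : ℕ) (hp : p.Prime) (𝔽 : Type*) [Field 𝔽] [CharP 𝔽 p]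
    (m n t : ℕ) (ht : 0 < t) (htm : t ≤ m) (hmn : m ≤ n)
    (k : ℕ) (hk : k ≤ t - 1) :
    ∃ N : ℕ, ∀ e : ℕ, 1 ≤ e →
      (nu (minorsIdeal 𝔽 m n t) (p ^ e) : ℝ) ≤
        (N : ℝ) + (((p ^ e - 1) * ((m - k) * (n - k)) : ℕ) : ℝ) / ((t - k : ℕ) : ℝ) := by
  classical
  open NuBoundAux in
  have hkt : k < t := by omega
  have hkm : k ≤ m := by omega
  have hkn : k ≤ n := by omega
  refine ⟨0, fun e he => ?_⟩
  have hq : 0 < p ^ e := pow_pos hp.pos e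
  set q := p ^ e with hqdef
  set hh := (m - k) * (n - k) with hhdef
  set B := ((q - 1) * hh) / (t - k) with hBdef
  have hnu : nu (minorsIdeal 𝔽 m n t) q ≤ B := by
    rw [nu]
    apply csSup_le'
    intro r hr
    simp only [Set.mem_setOf_eq] at hr
    by_contra hrB
    push_neg at hrB
    apply hr
    have hmul : hh * (q - 1) < r * (t - k) := by
      have h1 : (q - 1) * hh < (B + 1) * (t - k) :=
        (Nat.div_lt_iff_lt_mul (by omega : 0 < t - k)).mp (by omega)
      have h2 : (B + 1) * (t - k) ≤ r * (t - k) := Nat.mul_le_mul_right _ (by omega)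
      calc hh * (q - 1) = (q - 1) * hh := Nat.mul_comm _ _
        _ < (B + 1) * (t - k) := h1
        _ ≤ r * (t - k) := h2
    have hIsat : minorsIdeal 𝔽 m n t
        ≤ NuBoundAux.sat (NuBoundAux.uDet 𝔽 m n k hkm hkn)
            ((NuBoundAux.Jbrd 𝔽 m n k hkm hkn) ^ (t - k)) := by
      rw [minorsIdeal, Ideal.span_le]
      rintro f ⟨row, col, _, _, rfl⟩
      obtain ⟨N, hN⟩ := NuBoundAux.minor_sat 𝔽 m n k t hkm hkn row col
      exact ⟨N, hN⟩
    have hpow := NuBoundAux.pow_le_sat hIsat r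
    intro x hx
    obtain ⟨N, hN⟩ := hpow hx
    rw [← pow_mul] at hN
    have hJq : (NuBoundAux.Jbrd 𝔽 m n k hkm hkn) ^ ((t - k) * r)
        ≤ Ideal.span (Set.range fun ij : Fin (m - k) × Fin (n - k) =>
            NuBoundAux.Ymin 𝔽 m n k hkm hkn ij.1 ij.2 ^ q) := by
      rw [NuBoundAux.Jbrd]
      refine NuBoundAux.span_pow_le_qpow _ q _ ?_
      rw [Fintype.card_prod, Fintype.card_fin, Fintype.card_fin]
      calc (m - k) * (n - k) * (q - 1) = hh * (q - 1) := by rw [hhdef]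
        _ < r * (t - k) := hmul
        _ = (t - k) * r := Nat.mul_comm _ _
    have hN2 := hJq hN
    have hbump : NuBoundAux.uDet 𝔽 m n k hkm hkn ^ (q * N) * x
        ∈ Ideal.span (Set.range fun ij : Fin (m - k) × Fin (n - k) =>
            NuBoundAux.Ymin 𝔽 m n k hkm hkn ij.1 ij.2 ^ q) := by
      have hle : N ≤ q * N := Nat.le_mul_of_pos_left N hq
      have hmm := Ideal.mul_mem_left _ (NuBoundAux.uDet 𝔽 m n k hkm hkn ^ (q * N - N)) hN2
      rwa [← mul_assoc, ← pow_add, Nat.sub_add_cancel hle] at hmm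
    exact NuBoundAux.step3 p hp e m n k hkm hkn x N hbump
  have hfinal : (nu (minorsIdeal 𝔽 m n t) q : ℝ)
      ≤ (((q - 1) * hh : ℕ) : ℝ) / ((t - k : ℕ) : ℝ) :=
    le_trans (Nat.cast_le.mpr hnu) Nat.cast_div_le
  rw [Nat.cast_zero, zero_add]
  exact hfinal
end

section
/- Fix positive integers t ≤ m ≤ n, let X be an m×n matrix of indeterminates over a field 𝔽 of prime characteristic p, and R = 𝔽[X] with homogeneous maximal ideal 𝔪. Let k be the least integer in [0, t−1] with (m−k)(n−k)/(t−k) ≤ (m−k−1)(n−k−1)/(t−k−1) (division by zero interpreted as infinity), and let Δ be defined from Δ_k, Δ_k' and u = t(m+n−2k) − mn + k² as in the construction below. Under the lexicographical term order with x_{11} > x_{12} > ⋯ > x_{1n} > x_{21} > ⋯ > x_{mn}, every variable x_{ij} occurs in the initial monomial of Δ with exponent at most t−k; consequently Δ ∉ 𝔪^{[t−k+1]}, where 𝔪^{[s]} = (x_{ij}^s : 1 ≤ i ≤ m, 1 ≤ j ≤ n). -/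
open MvPolynomial

/-- The minor of the generic `m × n` matrix with the `s` consecutive rows
`r0+1, …, r0+s` and the `s` consecutive columns `c0+1, …, c0+s` (in `1`-based terms).
Indices are clamped into range; in all uses below they are within range, so this is
exactly the minor `[r0+1,…,r0+s | c0+1,…,c0+s]`. -/
noncomputable def intervalMinor (𝔽 : Type*) [Field 𝔽] (m n : ℕ) (s r0 c0 : ℕ) :
    MvPolynomial (Fin m × Fin n) 𝔽 :=
  if h : 0 < m ∧ 0 < n then
    (Matrix.of fun i j : Fin s =>
      (MvPolynomial.X (⟨min (r0 + (i : ℕ)) (m - 1), by omega⟩,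
        ⟨min (c0 + (j : ℕ)) (n - 1), by omega⟩) : MvPolynomial (Fin m × Fin n) 𝔽)).det
  else 0

/-- The element `Δ_k`, the product of the minors
`[1,…,m | i,…,i+m-1]` for `i = 1, …, n-m+1`, and
`[j,…,m | 1,…,m-j+1]·[1,…,m-j+1 | n-m+j,…,n]` for `j = 2, …, m-k`. -/
noncomputable def Delta (𝔽 : Type*) [Field 𝔽] (m n k : ℕ) :
    MvPolynomial (Fin m × Fin n) 𝔽 :=
  (∏ i ∈ Finset.range (n - m + 1), intervalMinor 𝔽 m n m 0 i) *
    ∏ j ∈ Finset.Icc 2 (m - k),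
      intervalMinor 𝔽 m n (m - j + 1) (j - 1) 0 *
        intervalMinor 𝔽 m n (m - j + 1) 0 (n - m + j - 1)

/-- The element `Δ_k' = Δ_k · [m-k+1,…,m | 1,…,k]` (for `k ≥ 1`). -/
noncomputable def Delta' (𝔽 : Type*) [Field 𝔽] (m n k : ℕ) :
    MvPolynomial (Fin m × Fin n) 𝔽 :=
  Delta 𝔽 m n k * intervalMinor 𝔽 m n k (m - k) 0

/-- The element `Δ`:  `Δ_0^t` if `k = 0`;  `Δ_k^u · (Δ_k')^{t-k-u}` if `k ≥ 1` and `u ≥ 0`;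
and `(Δ_k')^{t-k+u} · Δ_{k-1}^{-u}` if `k ≥ 1` and `u < 0`. -/
noncomputable def DeltaMain (𝔽 : Type*) [Field 𝔽] (m n t k : ℕ) :
    MvPolynomial (Fin m × Fin n) 𝔽 :=
  if k = 0 then Delta 𝔽 m n 0 ^ t
  else if 0 ≤ uInt t m n k then
    Delta 𝔽 m n k ^ (uInt t m n k).toNat *
      Delta' 𝔽 m n k ^ ((t : ℤ) - (k : ℤ) - uInt t m n k).toNat
  else
    Delta' 𝔽 m n k ^ ((t : ℤ) - (k : ℤ) + uInt t m n k).toNat *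
      Delta 𝔽 m n (k - 1) ^ (-uInt t m n k).toNat

/-- The variable `x_w` strictly precedes `x_v` in the ordering
`x_{11} > x_{12} > ⋯ > x_{1n} > x_{21} > ⋯ > x_{mn}`, i.e. `x_w > x_v` as variables. -/
def varBefore {m n : ℕ} (w v : Fin m × Fin n) : Prop :=
  w.1 < v.1 ∨ (w.1 = v.1 ∧ w.2 < v.2)

/-- The exponent vector `d` is strictly smaller than `e` in the lexicographical term order
determined by `x_{11} > x_{12} > ⋯ > x_{mn}`: at the most significant variable where they
differ, `d` has the smaller exponent. -/
def monLT {m n : ℕ} (d e : (Fin m × Fin n) →₀ ℕ) : Prop :=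
  ∃ v : Fin m × Fin n, (∀ w, varBefore w v → d w = e w) ∧ d v < e v

namespace DP

variable {m n : ℕ}

def enc (v : Fin m × Fin n) : ℕ := v.1 * n + v.2

lemma enc_lt_iff {w v : Fin m × Fin n} : enc w < enc v ↔ varBefore w v := by
  obtain ⟨⟨a, ha⟩, ⟨b, hb⟩⟩ := w
  obtain ⟨⟨c, hc⟩, ⟨d, hd⟩⟩ := v
  simp only [enc, varBefore, Fin.lt_def, Fin.mk_lt_mk, Fin.mk.injEq]
  constructor
  · intro h
    rcases Nat.lt_trichotomy a c with h1 | h1 | h1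
    · exact Or.inl h1
    · subst h1; right; exact ⟨rfl, by omega⟩
    · exfalso; nlinarith
  · rintro (h | ⟨rfl, h⟩)
    · nlinarith
    · omega

lemma enc_injective : Function.Injective (enc : Fin m × Fin n → ℕ) := by
  intro w v h
  by_contra hne
  have h1 : varBefore w v ∨ varBefore v w := by
    rcases Nat.lt_trichotomy (w.1 : ℕ) (v.1 : ℕ) with h2 | h2 | h2
    · exact Or.inl (Or.inl (by exact_mod_cast h2))
    · have : w.1 = v.1 := Fin.ext h2
      rcases Nat.lt_trichotomy (w.2 : ℕ) (v.2 : ℕ) with h3 | h3 | h3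
      · exact Or.inl (Or.inr ⟨this, by exact_mod_cast h3⟩)
      · exact absurd (Prod.ext this (Fin.ext h3)) hne
      · exact Or.inr (Or.inr ⟨this.symm, by exact_mod_cast h3⟩)
    · exact Or.inr (Or.inl (by exact_mod_cast h2))
  rcases h1 with h1 | h1 <;> have := enc_lt_iff.mpr h1 <;> omega

lemma monLT_irrefl (d : (Fin m × Fin n) →₀ ℕ) : ¬ monLT d d := by
  rintro ⟨v, -, h⟩; omega

lemma monLT_trans {a b c : (Fin m × Fin n) →₀ ℕ} (h1 : monLT a b) (h2 : monLT b c) :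
    monLT a c := by
  obtain ⟨v1, hp1, hl1⟩ := h1
  obtain ⟨v2, hp2, hl2⟩ := h2
  rcases Nat.lt_trichotomy (enc v1) (enc v2) with h | h | h
  · refine ⟨v1, fun w hw => ?_, ?_⟩
    · rw [hp1 w hw, hp2 w (enc_lt_iff.mp (lt_trans (enc_lt_iff.mpr hw) h))]
    · rw [← hp2 v1 (enc_lt_iff.mp h)]; exact hl1
  · have : v1 = v2 := enc_injective h
    subst this
    exact ⟨v1, fun w hw => (hp1 w hw).trans (hp2 w hw), lt_trans hl1 hl2⟩
  · refine ⟨v2, fun w hw => ?_, ?_⟩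
    · rw [hp1 w (enc_lt_iff.mp (lt_trans (enc_lt_iff.mpr hw) h)), hp2 w hw]
    · rw [hp1 v2 (enc_lt_iff.mp h)]; exact hl2

lemma monLT_total {d e : (Fin m × Fin n) →₀ ℕ} (h : d ≠ e) : monLT d e ∨ monLT e d := by
  classical
  set S : Finset (Fin m × Fin n) := (d.support ∪ e.support).filter (fun v => d v ≠ e v) with hS
  have hSne : S.Nonempty := by
    by_contra hemp
    apply h
    ext v
    by_contra hv
    have hv1 : v ∈ d.support ∪ e.support := by
      simp only [Finset.mem_union, Finsupp.mem_support_iff]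
      by_contra hc
      push_neg at hc
      exact hv (hc.1.trans hc.2.symm)
    exact hemp ⟨v, Finset.mem_filter.mpr ⟨hv1, hv⟩⟩
  obtain ⟨v0, hv0S, hv0min⟩ := S.exists_min_image enc hSne
  have hv0 : d v0 ≠ e v0 := (Finset.mem_filter.mp hv0S).2
  have hpre : ∀ w, varBefore w v0 → d w = e w := by
    intro w hw
    by_contra hc
    have hwS : w ∈ S := by
      refine Finset.mem_filter.mpr ⟨?_, hc⟩
      simp only [Finset.mem_union, Finsupp.mem_support_iff]
      by_contra hc2
      push_neg at hc2
      exact hc (hc2.1.trans hc2.2.symm)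
    have := hv0min w hwS
    have := enc_lt_iff.mpr hw
    omega
  rcases Nat.lt_or_ge (d v0) (e v0) with h1 | h1
  · exact Or.inl ⟨v0, hpre, h1⟩
  · exact Or.inr ⟨v0, fun w hw => (hpre w hw).symm, by omega⟩

lemma monLT_add_right {d e f : (Fin m × Fin n) →₀ ℕ} (h : monLT d e) :
    monLT (d + f) (e + f) := by
  obtain ⟨v, hp, hl⟩ := h
  exact ⟨v, fun w hw => by simp [Finsupp.add_apply, hp w hw], by
    simp only [Finsupp.add_apply]; omega⟩

lemma monLT_add_left {d e f : (Fin m × Fin n) →₀ ℕ} (h : monLT d e) :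
    monLT (f + d) (f + e) := by
  rw [add_comm f d, add_comm f e]; exact monLT_add_right h

lemma monLT_add_of_le {a b D E : (Fin m × Fin n) →₀ ℕ}
    (ha : a = D ∨ monLT a D) (hb : b = E ∨ monLT b E) (hne : ¬(a = D ∧ b = E)) :
    monLT (a + b) (D + E) := by
  rcases ha with rfl | ha
  · rcases hb with rfl | hb
    · exact absurd ⟨rfl, rfl⟩ hne
    · exact monLT_add_left hb
  · rcases hb with rfl | hb
    · exact monLT_add_right ha
    · exact monLT_trans (monLT_add_right ha) (monLT_add_left hb)

end DP

section Lead

variable (𝔽 : Type*) [Field 𝔽] {m n : ℕ}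

/-- `D` is the lex-leading exponent of `f`. -/
def IsLead (f : MvPolynomial (Fin m × Fin n) 𝔽) (D : (Fin m × Fin n) →₀ ℕ) : Prop :=
  D ∈ f.support ∧ ∀ E ∈ f.support, E ≠ D → monLT E D

variable {𝔽}

lemma isLead_one : IsLead 𝔽 (1 : MvPolynomial (Fin m × Fin n) 𝔽) 0 := by
  constructor
  · rw [MvPolynomial.mem_support_iff, MvPolynomial.coeff_one]
    simp
  · intro E hE hne
    rw [MvPolynomial.mem_support_iff, MvPolynomial.coeff_one] at hE
    exfalso
    apply hne
    by_contra hE0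
    rw [if_neg (fun h => hE0 h.symm)] at hE
    exact hE rfl

set_option maxHeartbeats 1000000 in
lemma IsLead.mul {f g : MvPolynomial (Fin m × Fin n) 𝔽} {D E : (Fin m × Fin n) →₀ ℕ}
    (hf : IsLead 𝔽 f D) (hg : IsLead 𝔽 g E) : IsLead 𝔽 (f * g) (D + E) := by
  classical
  obtain ⟨hfD, hfl⟩ := hf
  obtain ⟨hgE, hgl⟩ := hg
  have key : ∀ a b : (Fin m × Fin n) →₀ ℕ, a ∈ f.support → b ∈ g.support →
      a + b = D + E → a = D ∧ b = E := by
    intro a b ha hb hab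
    by_contra hc
    have h1 : monLT (a + b) (D + E) := by
      refine DP.monLT_add_of_le ?_ ?_ hc
      · rcases eq_or_ne a D with h | h
        · exact Or.inl h
        · exact Or.inr (hfl a ha h)
      · rcases eq_or_ne b E with h | h
        · exact Or.inl h
        · exact Or.inr (hgl b hb h)
    rw [hab] at h1
    exact DP.monLT_irrefl _ h1
  have hcoeff : MvPolynomial.coeff (D + E) (f * g) =
      MvPolynomial.coeff D f * MvPolynomial.coeff E g := by
    rw [MvPolynomial.coeff_mul]
    rw [Finset.sum_eq_single_of_mem (D, E) (Finset.HasAntidiagonal.mem_antidiagonal.mpr rfl)]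
    · intro p hp hne
      rw [Finset.HasAntidiagonal.mem_antidiagonal] at hp
      by_contra hz
      have h1 : p.1 ∈ f.support := by
        rw [MvPolynomial.mem_support_iff]; intro h; apply hz; rw [h, zero_mul]
      have h2 : p.2 ∈ g.support := by
        rw [MvPolynomial.mem_support_iff]; intro h; apply hz; rw [h, mul_zero]
      obtain ⟨e1, e2⟩ := key p.1 p.2 h1 h2 hp
      exact hne (Prod.ext e1 e2)
  constructor
  · rw [MvPolynomial.mem_support_iff, hcoeff]
    exact mul_ne_zero (MvPolynomial.mem_support_iff.mp hfD)
      (MvPolynomial.mem_support_iff.mp hgE)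
  · intro F hF hne
    have := MvPolynomial.support_mul f g hF
    rw [Finset.mem_add] at this
    obtain ⟨a, ha, b, hb, rfl⟩ := this
    refine DP.monLT_add_of_le ?_ ?_ ?_
    · rcases eq_or_ne a D with h | h
      · exact Or.inl h
      · exact Or.inr (hfl a ha h)
    · rcases eq_or_ne b E with h | h
      · exact Or.inl h
      · exact Or.inr (hgl b hb h)
    · rintro ⟨rfl, rfl⟩; exact hne rfl

lemma IsLead.pow {f : MvPolynomial (Fin m × Fin n) 𝔽} {D : (Fin m × Fin n) →₀ ℕ}
    (hf : IsLead 𝔽 f D) (j : ℕ) : IsLead 𝔽 (f ^ j) (j • D) := by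
  induction j with
  | zero => simpa using isLead_one
  | succ i ih =>
      rw [pow_succ, succ_nsmul]
      exact ih.mul hf

lemma isLead_prod {ι : Type*} (s : Finset ι) (f : ι → MvPolynomial (Fin m × Fin n) 𝔽)
    (D : ι → (Fin m × Fin n) →₀ ℕ) (h : ∀ i ∈ s, IsLead 𝔽 (f i) (D i)) :
    IsLead 𝔽 (∏ i ∈ s, f i) (∑ i ∈ s, D i) := by
  classical
  induction s using Finset.cons_induction with
  | empty => simpa using isLead_one
  | cons a t hat ih =>
      rw [Finset.prod_cons, Finset.sum_cons]
      exact (h a (Finset.mem_cons_self a t)).mul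
        (ih fun i hi => h i (Finset.mem_cons_of_mem hi))

end Lead

section Det

variable {𝔽 : Type*} [Field 𝔽] {m n : ℕ}

lemma prod_X_eq_monomial {ι : Type*} (s : Finset ι) (v : ι → Fin m × Fin n) :
    (∏ i ∈ s, (MvPolynomial.X (v i) : MvPolynomial (Fin m × Fin n) 𝔽)) =
      MvPolynomial.monomial (∑ i ∈ s, Finsupp.single (v i) 1) 1 := by
  classical
  induction s using Finset.cons_induction with
  | empty => simp [MvPolynomial.monomial_zero']
  | cons a t hat ih =>
      rw [Finset.prod_cons, Finset.sum_cons, ih, MvPolynomial.X,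
        MvPolynomial.monomial_mul, mul_one]

lemma sum_single_apply {ι : Type*} [DecidableEq (Fin m × Fin n)] (s : Finset ι)
    (v : ι → Fin m × Fin n) (w : Fin m × Fin n) :
    (∑ i ∈ s, Finsupp.single (v i) (1 : ℕ)) w =
      ∑ i ∈ s, if v i = w then 1 else 0 := by
  rw [Finsupp.finset_sum_apply]
  exact Finset.sum_congr rfl fun i _ => Finsupp.single_apply

set_option maxHeartbeats 2000000 in
lemma isLead_det (s : ℕ) (row : Fin s → Fin m) (col : Fin s → Fin n)
    (hrow : StrictMono row) (hcol : StrictMono col) :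
    IsLead 𝔽 (Matrix.det (Matrix.of fun i j : Fin s =>
        (MvPolynomial.X (row i, col j) : MvPolynomial (Fin m × Fin n) 𝔽)))
      (∑ i : Fin s, Finsupp.single (row i, col i) 1) := by
  classical
  set Df : Equiv.Perm (Fin s) → ((Fin m × Fin n) →₀ ℕ) :=
    fun σ => ∑ i : Fin s, Finsupp.single (row (σ i), col i) 1 with hDf
  have hDapply : ∀ (σ : Equiv.Perm (Fin s)) (b : Fin s) (a : Fin m),
      Df σ (a, col b) = if row (σ b) = a then 1 else 0 := by
    intro σ b a
    rw [hDf]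
    simp only
    rw [sum_single_apply]
    rw [Finset.sum_eq_single b]
    · simp [Prod.ext_iff]
    · intro i _ hib
      rw [if_neg]
      intro h
      rw [Prod.ext_iff] at h
      exact hib (hcol.injective h.2)
    · intro h; exact absurd (Finset.mem_univ b) h
  have hDzero : ∀ (σ : Equiv.Perm (Fin s)) (w : Fin m × Fin n),
      (∀ b : Fin s, col b ≠ w.2) → Df σ w = 0 := by
    intro σ w hw
    rw [hDf]
    simp only
    rw [sum_single_apply]
    refine Finset.sum_eq_zero fun i _ => ?_
    rw [if_neg]
    intro h
    exact hw i (by rw [Prod.ext_iff] at h; exact h.2)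
  have hDinj : Function.Injective Df := by
    intro σ τ h
    refine Equiv.ext fun b => ?_
    have h1 := hDapply σ b (row (σ b))
    have h2 := hDapply τ b (row (σ b))
    rw [if_pos rfl] at h1
    rw [h, h2] at h1
    have h3 : row (τ b) = row (σ b) := by
      by_contra hc
      rw [if_neg hc] at h1
      exact zero_ne_one h1
    exact (hrow.injective h3).symm
  have hD1 : Df 1 = ∑ i : Fin s, Finsupp.single (row i, col i) 1 := by
    rw [hDf]; rfl
  have hdet : (Matrix.det (Matrix.of fun i j : Fin s =>
      (MvPolynomial.X (row i, col j) : MvPolynomial (Fin m × Fin n) 𝔽))) =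
      ∑ σ : Equiv.Perm (Fin s),
        ((Equiv.Perm.sign σ : ℤ) : MvPolynomial (Fin m × Fin n) 𝔽) *
          MvPolynomial.monomial (Df σ) 1 := by
    rw [Matrix.det_apply']
    refine Finset.sum_congr rfl fun σ _ => ?_
    rw [← prod_X_eq_monomial]
    rfl
  have hcoeff : ∀ E, MvPolynomial.coeff E (Matrix.det (Matrix.of fun i j : Fin s =>
      (MvPolynomial.X (row i, col j) : MvPolynomial (Fin m × Fin n) 𝔽))) =
      ∑ σ : Equiv.Perm (Fin s),
        if Df σ = E then ((Equiv.Perm.sign σ : ℤ) : 𝔽) else 0 := by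
    intro E
    rw [hdet, MvPolynomial.coeff_sum]
    refine Finset.sum_congr rfl fun σ _ => ?_
    rw [← map_intCast (MvPolynomial.C : 𝔽 →+* MvPolynomial (Fin m × Fin n) 𝔽),
      MvPolynomial.C_mul_monomial, mul_one, MvPolynomial.coeff_monomial]
  have hlead : MvPolynomial.coeff (Df 1) (Matrix.det (Matrix.of fun i j : Fin s =>
      (MvPolynomial.X (row i, col j) : MvPolynomial (Fin m × Fin n) 𝔽))) = 1 := by
    rw [hcoeff]
    rw [Finset.sum_eq_single_of_mem (1 : Equiv.Perm (Fin s)) (Finset.mem_univ _)]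
    · simp
    · intro σ _ hσ
      rw [if_neg (fun h => hσ (hDinj h))]
  have hsup : ∀ E ∈ (Matrix.det (Matrix.of fun i j : Fin s =>
      (MvPolynomial.X (row i, col j) : MvPolynomial (Fin m × Fin n) 𝔽))).support,
      ∃ σ : Equiv.Perm (Fin s), Df σ = E := by
    intro E hE
    rw [MvPolynomial.mem_support_iff, hcoeff] at hE
    by_contra hc
    push_neg at hc
    exact hE (Finset.sum_eq_zero fun σ _ => if_neg (hc σ))
  have hmonLT : ∀ σ : Equiv.Perm (Fin s), σ ≠ 1 → monLT (Df σ) (Df 1) := by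
    intro σ hσ
    have hSne : (Finset.univ.filter fun i => σ i ≠ i).Nonempty := by
      by_contra hemp
      rw [Finset.not_nonempty_iff_eq_empty, Finset.filter_eq_empty_iff] at hemp
      exact hσ (Equiv.ext fun i => not_not.mp (by simpa using hemp (Finset.mem_univ i)))
    set i0 : Fin s := (Finset.univ.filter fun i => σ i ≠ i).min' hSne with hi0
    have hi0mem : σ i0 ≠ i0 :=
      (Finset.mem_filter.mp ((Finset.univ.filter fun i => σ i ≠ i).min'_mem hSne)).2
    have hfix : ∀ i : Fin s, i < i0 → σ i = i := by
      intro i hi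
      by_contra hc
      have : i0 ≤ i := Finset.min'_le _ i (Finset.mem_filter.mpr ⟨Finset.mem_univ i, hc⟩)
      exact absurd hi (not_lt.mpr this)
    have hge : ∀ b : Fin s, i0 ≤ b → i0 ≤ σ b := by
      intro b hb
      by_contra hc
      push_neg at hc
      have h1 : σ (σ b) = σ b := hfix (σ b) hc
      have h2 : σ b = b := σ.injective h1
      rw [h2] at hc
      exact absurd hb (not_le.mpr hc)
    refine ⟨(row i0, col i0), ?_, ?_⟩
    · rintro ⟨a, d⟩ hw
      by_cases hd : ∃ b : Fin s, col b = d
      · obtain ⟨b, rfl⟩ := hd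
        rw [hDapply σ b a, hDapply 1 b a]
        rcases lt_or_ge b i0 with hb | hb
        · rw [hfix b hb]; simp [Equiv.Perm.one_apply]; rfl
        · rcases hw with hw | ⟨hw1, hw2⟩
          · have h1 : ¬ row (σ b) = a := by
              intro h
              have : row i0 ≤ row (σ b) := hrow.monotone (hge b hb)
              rw [h] at this
              exact absurd hw (not_lt.mpr this)
            have h2 : ¬ row ((1 : Equiv.Perm (Fin s)) b) = a := by
              intro h
              rw [Equiv.Perm.one_apply] at h
              have : row i0 ≤ row b := hrow.monotone hb
              rw [h] at this
              exact absurd hw (not_lt.mpr this)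
            rw [if_neg h1, if_neg h2]
          · exfalso
            have : b < i0 := by
              rcases lt_or_ge b i0 with h | h
              · exact h
              · exact absurd hw2 (not_lt.mpr (hcol.monotone h))
            exact absurd this (not_lt.mpr hb)
      · push_neg at hd
        rw [hDzero σ (a, d) hd, hDzero 1 (a, d) hd]
    · have h1 : Df σ (row i0, col i0) = 0 := by
        rw [hDapply σ i0 (row i0), if_neg (fun h => hi0mem (hrow.injective h))]
      have h2 : Df 1 (row i0, col i0) = 1 := by
        rw [hDapply 1 i0 (row i0)]
        simp
      rw [h1, h2]
      exact one_pos
  constructor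
  · rw [← hD1, MvPolynomial.mem_support_iff, hlead]
    exact one_ne_zero
  · intro E hE hne
    obtain ⟨σ, rfl⟩ := hsup E hE
    rw [← hD1] at hne ⊢
    exact hmonLT σ (fun h => hne (by rw [h]))

end Det

section DiagD

variable {𝔽 : Type*} [Field 𝔽] {m n : ℕ}

noncomputable def diagD (m n s r0 c0 : ℕ) : (Fin m × Fin n) →₀ ℕ :=
  Finsupp.equivFunOnFinite.symm fun v =>
    if r0 ≤ (v.1 : ℕ) ∧ (v.1 : ℕ) < r0 + s ∧ (v.1 : ℕ) + c0 = r0 + (v.2 : ℕ) then 1 else 0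

lemma diagD_apply (s r0 c0 : ℕ) (v : Fin m × Fin n) :
    diagD m n s r0 c0 v =
      if r0 ≤ (v.1 : ℕ) ∧ (v.1 : ℕ) < r0 + s ∧ (v.1 : ℕ) + c0 = r0 + (v.2 : ℕ) then 1
      else 0 := by
  simp [diagD]

lemma isLead_intervalMinor (s r0 c0 : ℕ) (hm : 0 < m) (hn : 0 < n)
    (h1 : r0 + s ≤ m) (h2 : c0 + s ≤ n) :
    IsLead 𝔽 (intervalMinor 𝔽 m n s r0 c0) (diagD m n s r0 c0) := by
  classical
  have hrow' : ∀ i : Fin s, r0 + (i : ℕ) < m := fun i => by omega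
  have hcol' : ∀ j : Fin s, c0 + (j : ℕ) < n := fun j => by omega
  set row : Fin s → Fin m := fun i => ⟨r0 + (i : ℕ), hrow' i⟩ with hrowdef
  set col : Fin s → Fin n := fun j => ⟨c0 + (j : ℕ), hcol' j⟩ with hcoldef
  have hrow : StrictMono row := fun i j hij => by
    simp only [hrowdef, Fin.mk_lt_mk]
    have : (i : ℕ) < (j : ℕ) := hij
    omega
  have hcol : StrictMono col := fun i j hij => by
    simp only [hcoldef, Fin.mk_lt_mk]
    have : (i : ℕ) < (j : ℕ) := hij
    omega
  have heq : intervalMinor 𝔽 m n s r0 c0 = Matrix.det (Matrix.of fun i j : Fin s =>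
      (MvPolynomial.X (row i, col j) : MvPolynomial (Fin m × Fin n) 𝔽)) := by
    rw [intervalMinor, dif_pos ⟨hm, hn⟩]
    congr 1
    refine Matrix.ext fun i j => ?_
    simp only [Matrix.of_apply]
    refine congrArg (MvPolynomial.X : Fin m × Fin n → MvPolynomial (Fin m × Fin n) 𝔽)
      (Prod.ext (Fin.ext ?_) (Fin.ext ?_))
    · simp only [hrowdef]
      have := i.2
      omega
    · simp only [hcoldef]
      have := j.2
      omega
  have hd : (∑ i : Fin s, Finsupp.single (row i, col i) 1) = diagD m n s r0 c0 := by
    ext v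
    rw [sum_single_apply, diagD_apply]
    by_cases hc : r0 ≤ (v.1 : ℕ) ∧ (v.1 : ℕ) < r0 + s ∧ (v.1 : ℕ) + c0 = r0 + (v.2 : ℕ)
    · rw [if_pos hc]
      have hi : ((v.1 : ℕ) - r0) < s := by omega
      rw [Finset.sum_eq_single_of_mem (⟨(v.1 : ℕ) - r0, hi⟩ : Fin s) (Finset.mem_univ _)]
      · rw [if_pos]
        refine Prod.ext (Fin.ext ?_) (Fin.ext ?_)
        · simp only [hrowdef]; omega
        · simp only [hcoldef]; omega
      · intro i _ hne
        rw [if_neg]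
        intro h
        apply hne
        have h1' : ((row i : Fin m) : ℕ) = (v.1 : ℕ) :=
          congrArg (fun w : Fin m × Fin n => (w.1 : ℕ)) h
        simp only [hrowdef] at h1'
        refine Fin.ext ?_
        show (i : ℕ) = (v.1 : ℕ) - r0
        omega
    · rw [if_neg hc]
      refine Finset.sum_eq_zero fun i _ => if_neg fun h => hc ?_
      have h1' : ((row i : Fin m) : ℕ) = (v.1 : ℕ) :=
        congrArg (fun w : Fin m × Fin n => (w.1 : ℕ)) h
      have h2' : ((col i : Fin n) : ℕ) = (v.2 : ℕ) :=
        congrArg (fun w : Fin m × Fin n => (w.2 : ℕ)) h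
      simp only [hrowdef] at h1'
      simp only [hcoldef] at h2'
      have := i.2
      omega
  rw [heq, ← hd]
  exact isLead_det s row col hrow hcol

noncomputable def DeltaLead (m n k : ℕ) : (Fin m × Fin n) →₀ ℕ :=
  (∑ i ∈ Finset.range (n - m + 1), diagD m n m 0 i) +
    ∑ j ∈ Finset.Icc 2 (m - k),
      (diagD m n (m - j + 1) (j - 1) 0 + diagD m n (m - j + 1) 0 (n - m + j - 1))

lemma isLead_Delta (k : ℕ) (hm : 0 < m) (hmn : m ≤ n) :
    IsLead 𝔽 (Delta 𝔽 m n k) (DeltaLead m n k) := by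
  have hn : 0 < n := lt_of_lt_of_le hm hmn
  refine IsLead.mul (isLead_prod _ _ _ fun i hi => ?_) (isLead_prod _ _ _ fun j hj => ?_)
  · rw [Finset.mem_range] at hi
    exact isLead_intervalMinor _ _ _ hm hn (by omega) (by omega)
  · rw [Finset.mem_Icc] at hj
    exact IsLead.mul (isLead_intervalMinor _ _ _ hm hn (by omega) (by omega))
      (isLead_intervalMinor _ _ _ hm hn (by omega) (by omega))

lemma isLead_Delta' (k : ℕ) (hm : 0 < m) (hmn : m ≤ n) (hk : k ≤ m) :
    IsLead 𝔽 (Delta' 𝔽 m n k) (DeltaLead m n k + diagD m n k (m - k) 0) := by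
  have hn : 0 < n := lt_of_lt_of_le hm hmn
  exact IsLead.mul (isLead_Delta k hm hmn)
    (isLead_intervalMinor _ _ _ hm hn (by omega) (by omega))

end DiagD

section Bounds

variable {m n : ℕ}

lemma sum_ite_le_one {S : Finset ℕ} {P : ℕ → Prop} [DecidablePred P]
    (h : ∀ i ∈ S, P i → ∀ j ∈ S, P j → i = j) :
    (∑ i ∈ S, if P i then 1 else 0) ≤ 1 := by
  classical
  have heq : (∑ i ∈ S, if P i then 1 else 0) = (S.filter P).card := by
    rw [Finset.card_filter]
  rw [heq]
  refine Finset.card_le_one.mpr fun a ha b hb => ?_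
  rw [Finset.mem_filter] at ha hb
  exact h a ha.1 ha.2 b hb.1 hb.2

lemma DeltaLead_add_le (k e : ℕ) (hmn : m ≤ n) (hkm : k ≤ m) (he : e ≤ k) (hem : e + 1 ≤ m)
    (v : Fin m × Fin n) :
    (DeltaLead m n k + diagD m n e (m - e) 0) v ≤ 1 := by
  classical
  rw [Finsupp.add_apply]
  unfold DeltaLead
  rw [Finsupp.add_apply, Finsupp.finset_sum_apply, Finsupp.finset_sum_apply]
  simp only [Finsupp.add_apply, diagD_apply]
  rw [Finset.sum_add_distrib]
  have ha : (v.1 : ℕ) < m := v.1.2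
  have hb : (v.2 : ℕ) < n := v.2.2
  by_cases hex : m - e ≤ (v.1 : ℕ) ∧ (v.1 : ℕ) < m - e + e ∧
      (v.1 : ℕ) + 0 = m - e + (v.2 : ℕ)
  · -- extra diagonal present: all other sums vanish
    rw [if_pos hex]
    have h1 : (∑ i ∈ Finset.range (n - m + 1),
        if 0 ≤ (v.1 : ℕ) ∧ (v.1 : ℕ) < 0 + m ∧ (v.1 : ℕ) + i = 0 + (v.2 : ℕ) then 1 else 0)
        = 0 := by
      refine Finset.sum_eq_zero fun i hi => if_neg ?_
      rw [Finset.mem_range] at hi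
      omega
    have h2 : (∑ j ∈ Finset.Icc 2 (m - k),
        if j - 1 ≤ (v.1 : ℕ) ∧ (v.1 : ℕ) < j - 1 + (m - j + 1) ∧
          (v.1 : ℕ) + 0 = j - 1 + (v.2 : ℕ) then 1 else 0) = 0 := by
      refine Finset.sum_eq_zero fun j hj => if_neg ?_
      rw [Finset.mem_Icc] at hj
      omega
    have h3 : (∑ j ∈ Finset.Icc 2 (m - k),
        if 0 ≤ (v.1 : ℕ) ∧ (v.1 : ℕ) < 0 + (m - j + 1) ∧
          (v.1 : ℕ) + (n - m + j - 1) = 0 + (v.2 : ℕ) then 1 else 0) = 0 := by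
      refine Finset.sum_eq_zero fun j hj => if_neg ?_
      rw [Finset.mem_Icc] at hj
      omega
    rw [h1, h2, h3]
    omega
  · rw [if_neg hex, add_zero]
    rcases Nat.lt_or_ge (v.2 : ℕ) (v.1 : ℕ) with hba | hba
    · -- strictly below the main diagonal band: only the lower-left minors matter
      have h1 : (∑ i ∈ Finset.range (n - m + 1),
          if 0 ≤ (v.1 : ℕ) ∧ (v.1 : ℕ) < 0 + m ∧ (v.1 : ℕ) + i = 0 + (v.2 : ℕ) then 1 else 0)
          = 0 := by
        refine Finset.sum_eq_zero fun i hi => if_neg ?_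
        omega
      have h3 : (∑ j ∈ Finset.Icc 2 (m - k),
          if 0 ≤ (v.1 : ℕ) ∧ (v.1 : ℕ) < 0 + (m - j + 1) ∧
            (v.1 : ℕ) + (n - m + j - 1) = 0 + (v.2 : ℕ) then 1 else 0) = 0 := by
        refine Finset.sum_eq_zero fun j hj => if_neg ?_
        rw [Finset.mem_Icc] at hj
        omega
      have h2 : (∑ j ∈ Finset.Icc 2 (m - k),
          if j - 1 ≤ (v.1 : ℕ) ∧ (v.1 : ℕ) < j - 1 + (m - j + 1) ∧
            (v.1 : ℕ) + 0 = j - 1 + (v.2 : ℕ) then 1 else 0) ≤ 1 := by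
        refine sum_ite_le_one fun i hi hPi j hj hPj => ?_
        omega
      omega
    · rcases Nat.lt_or_ge ((v.1 : ℕ) + (n - m)) (v.2 : ℕ) with hd | hd
      · -- strictly above the band: only the upper-right minors matter
        have h1 : (∑ i ∈ Finset.range (n - m + 1),
            if 0 ≤ (v.1 : ℕ) ∧ (v.1 : ℕ) < 0 + m ∧ (v.1 : ℕ) + i = 0 + (v.2 : ℕ) then 1 else 0)
            = 0 := by
          refine Finset.sum_eq_zero fun i hi => if_neg ?_
          rw [Finset.mem_range] at hi
          omega
        have h2 : (∑ j ∈ Finset.Icc 2 (m - k),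
            if j - 1 ≤ (v.1 : ℕ) ∧ (v.1 : ℕ) < j - 1 + (m - j + 1) ∧
              (v.1 : ℕ) + 0 = j - 1 + (v.2 : ℕ) then 1 else 0) = 0 := by
          refine Finset.sum_eq_zero fun j hj => if_neg ?_
          rw [Finset.mem_Icc] at hj
          omega
        have h3 : (∑ j ∈ Finset.Icc 2 (m - k),
            if 0 ≤ (v.1 : ℕ) ∧ (v.1 : ℕ) < 0 + (m - j + 1) ∧
              (v.1 : ℕ) + (n - m + j - 1) = 0 + (v.2 : ℕ) then 1 else 0) ≤ 1 := by
          refine sum_ite_le_one fun i hi hPi j hj hPj => ?_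
          rw [Finset.mem_Icc] at hi hj
          omega
        omega
      · -- inside the band of full-size minors
        have h2 : (∑ j ∈ Finset.Icc 2 (m - k),
            if j - 1 ≤ (v.1 : ℕ) ∧ (v.1 : ℕ) < j - 1 + (m - j + 1) ∧
              (v.1 : ℕ) + 0 = j - 1 + (v.2 : ℕ) then 1 else 0) = 0 := by
          refine Finset.sum_eq_zero fun j hj => if_neg ?_
          rw [Finset.mem_Icc] at hj
          omega
        have h3 : (∑ j ∈ Finset.Icc 2 (m - k),
            if 0 ≤ (v.1 : ℕ) ∧ (v.1 : ℕ) < 0 + (m - j + 1) ∧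
              (v.1 : ℕ) + (n - m + j - 1) = 0 + (v.2 : ℕ) then 1 else 0) = 0 := by
          refine Finset.sum_eq_zero fun j hj => if_neg ?_
          rw [Finset.mem_Icc] at hj
          omega
        have h1 : (∑ i ∈ Finset.range (n - m + 1),
            if 0 ≤ (v.1 : ℕ) ∧ (v.1 : ℕ) < 0 + m ∧ (v.1 : ℕ) + i = 0 + (v.2 : ℕ) then 1 else 0)
            ≤ 1 := by
          refine sum_ite_le_one fun i hi hPi j hj hPj => ?_
          omega
        omega

lemma DeltaLead_le (k : ℕ) (hmn : m ≤ n) (hkm : k ≤ m) (hm : 0 < m) (v : Fin m × Fin n) :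
    DeltaLead m n k v ≤ 1 := by
  have h := DeltaLead_add_le k 0 hmn hkm (Nat.zero_le k) (by omega) v
  rw [Finsupp.add_apply, diagD_apply] at h
  omega

end Bounds

section Arith

lemma uInt_eq (t m n k : ℕ) (hkt : k ≤ t) (htm : t ≤ m) (hmn : m ≤ n) :
    uInt t m n k = ((t : ℤ) - k) * (((m : ℤ) - k) + ((n : ℤ) - k)) -
      ((m : ℤ) - k) * ((n : ℤ) - k) := by
  unfold uInt
  ring

lemma uInt_le (t m n k : ℕ) (ht : 0 < t) (htm : t ≤ m) (hmn : m ≤ n) (hk : k ≤ t - 1)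
    (hCk : minCond t m n k) : uInt t m n k ≤ (t : ℤ) - k := by
  have hkt : k < t := by omega
  set M : ℤ := (m : ℤ) - k with hM
  set N : ℤ := (n : ℤ) - k with hN
  set T : ℤ := (t : ℤ) - k with hT
  have hM1 : 1 ≤ M := by omega
  have hN1 : 1 ≤ N := by omega
  have hT1 : 1 ≤ T := by omega
  rw [uInt_eq t m n k (by omega) htm hmn]
  by_cases hk1 : k = t - 1
  · have hTeq : T = 1 := by omega
    rw [hTeq]
    nlinarith [mul_nonneg (by omega : (0:ℤ) ≤ M - 1) (by omega : (0:ℤ) ≤ N - 1)]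
  · rcases hCk with hk1' | hreal
    · exact absurd hk1' hk1
    · have hk2 : k + 2 ≤ t := by omega
      have hd1 : (0 : ℝ) < ((t - k : ℕ) : ℝ) := by
        have : 0 < t - k := by omega
        exact_mod_cast this
      have hd2 : (0 : ℝ) < ((t - k - 1 : ℕ) : ℝ) := by
        have : 0 < t - k - 1 := by omega
        exact_mod_cast this
      rw [div_le_div_iff₀ hd1 hd2] at hreal
      have hnat : (m - k) * (n - k) * (t - k - 1) ≤ (m - k - 1) * (n - k - 1) * (t - k) := by
        exact_mod_cast hreal
      have hint : (M * N) * (T - 1) ≤ (M - 1) * (N - 1) * T := by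
        have c1 : ((m - k : ℕ) : ℤ) = M := by omega
        have c2 : ((n - k : ℕ) : ℤ) = N := by omega
        have c3 : ((t - k : ℕ) : ℤ) = T := by omega
        have c4 : ((m - k - 1 : ℕ) : ℤ) = M - 1 := by omega
        have c5 : ((n - k - 1 : ℕ) : ℤ) = N - 1 := by omega
        have c6 : ((t - k - 1 : ℕ) : ℤ) = T - 1 := by omega
        have := hnat
        zify at this
        rw [c1, c2, c3, c4, c5, c6] at this
        exact this
      nlinarith [hint]

lemma uInt_ge (t m n k : ℕ) (ht : 0 < t) (htm : t ≤ m) (hmn : m ≤ n) (hk : k ≤ t - 1)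
    (hk1 : 1 ≤ k) (hnot : ¬ minCond t m n (k - 1)) :
    1 - ((t : ℤ) - k) ≤ uInt t m n k := by
  have hkt : k < t := by omega
  set M : ℤ := (m : ℤ) - k with hM
  set N : ℤ := (n : ℤ) - k with hN
  set T : ℤ := (t : ℤ) - k with hT
  have hM1 : 1 ≤ M := by omega
  have hN1 : 1 ≤ N := by omega
  have hT1 : 1 ≤ T := by omega
  rw [uInt_eq t m n k (by omega) htm hmn]
  rw [minCond, not_or, not_le] at hnot
  obtain ⟨-, hreal⟩ := hnot
  have hd1 : (0 : ℝ) < ((t - (k - 1) : ℕ) : ℝ) := by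
    have : 0 < t - (k - 1) := by omega
    exact_mod_cast this
  have hd2 : (0 : ℝ) < ((t - (k - 1) - 1 : ℕ) : ℝ) := by
    have : 0 < t - (k - 1) - 1 := by omega
    exact_mod_cast this
  rw [div_lt_div_iff₀ hd2 hd1] at hreal
  have hnat : (m - (k - 1) - 1) * (n - (k - 1) - 1) * (t - (k - 1)) <
      (m - (k - 1)) * (n - (k - 1)) * (t - (k - 1) - 1) := by
    exact_mod_cast hreal
  have hint : (M * N) * (T + 1) < (M + 1) * (N + 1) * T := by
    have c1 : ((m - (k - 1) : ℕ) : ℤ) = M + 1 := by omega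
    have c2 : ((n - (k - 1) : ℕ) : ℤ) = N + 1 := by omega
    have c3 : ((t - (k - 1) : ℕ) : ℤ) = T + 1 := by omega
    have c4 : ((m - (k - 1) - 1 : ℕ) : ℤ) = M := by omega
    have c5 : ((n - (k - 1) - 1 : ℕ) : ℤ) = N := by omega
    have c6 : ((t - (k - 1) - 1 : ℕ) : ℤ) = T := by omega
    have := hnat
    zify at this
    rw [c1, c2, c3, c4, c5, c6] at this
    exact this
  nlinarith [hint]

end Arith

/-- Let `k` be the least integer in `[0, t-1]` with
`(m-k)(n-k)/(t-k) ≤ (m-k-1)(n-k-1)/(t-k-1)` (division by zero read as infinity), and let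
`Δ` be as constructed above.  In the lexicographical term order with
`x_{11} > x_{12} > ⋯ > x_{mn}`, every variable occurs in the initial monomial of `Δ` with
exponent at most `t-k`; consequently `Δ ∉ 𝔪^{[t-k+1]}`, the ideal generated by the
`(t-k+1)`-st powers of the variables. -/
theorem Delta_not_mem_bracket (p : ℕ) (hp : p.Prime)
    (𝔽 : Type*) [Field 𝔽] [CharP 𝔽 p]
    (m n t : ℕ) (ht : 0 < t) (htm : t ≤ m) (hmn : m ≤ n)
    (k : ℕ) (hk : k ≤ t - 1) (hCk : minCond t m n k)
    (hleast : ∀ j : ℕ, j < k → ¬ minCond t m n j) :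
    (∃ D : (Fin m × Fin n) →₀ ℕ, D ∈ (DeltaMain 𝔽 m n t k).support ∧
      (∀ E ∈ (DeltaMain 𝔽 m n t k).support, E ≠ D → monLT E D) ∧
      ∀ v : Fin m × Fin n, D v ≤ t - k) ∧
    DeltaMain 𝔽 m n t k ∉
      Ideal.span {g : MvPolynomial (Fin m × Fin n) 𝔽 |
        ∃ v : Fin m × Fin n, g = MvPolynomial.X v ^ (t - k + 1)} := by
  classical
  have hm : 0 < m := lt_of_lt_of_le ht htm
  have hn : 0 < n := lt_of_lt_of_le hm hmn
  have hkt : k < t := by omega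
  have hkm : k < m := lt_of_lt_of_le hkt htm
  obtain ⟨D, hD, hbound⟩ : ∃ D, IsLead 𝔽 (DeltaMain 𝔽 m n t k) D ∧
      ∀ v : Fin m × Fin n, D v ≤ t - k := by
    unfold DeltaMain
    by_cases hk0 : k = 0
    · subst hk0
      rw [if_pos rfl]
      refine ⟨t • DeltaLead m n 0, (isLead_Delta 0 hm hmn).pow t, fun v => ?_⟩
      rw [Finsupp.smul_apply, smul_eq_mul]
      have hb := DeltaLead_le 0 hmn (Nat.zero_le m) hm v
      have : t * DeltaLead m n 0 v ≤ t * 1 := Nat.mul_le_mul_left t hb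
      omega
    · rw [if_neg hk0]
      have hk1 : 1 ≤ k := by omega
      by_cases hu : 0 ≤ uInt t m n k
      · rw [if_pos hu]
        have hule : uInt t m n k ≤ (t : ℤ) - k := uInt_le t m n k ht htm hmn hk hCk
        refine ⟨_, IsLead.mul ((isLead_Delta k hm hmn).pow (uInt t m n k).toNat)
          ((isLead_Delta' k hm hmn hkm.le).pow ((t : ℤ) - k - uInt t m n k).toNat),
          fun v => ?_⟩
        rw [Finsupp.add_apply, Finsupp.smul_apply, Finsupp.smul_apply, smul_eq_mul,
          smul_eq_mul]
        have b1 := DeltaLead_le k hmn hkm.le hm v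
        have b2 := DeltaLead_add_le k k hmn hkm.le le_rfl (by omega) v
        have e1 : (uInt t m n k).toNat * DeltaLead m n k v ≤ (uInt t m n k).toNat * 1 :=
          Nat.mul_le_mul_left _ b1
        have e2 : ((t : ℤ) - k - uInt t m n k).toNat *
            (DeltaLead m n k + diagD m n k (m - k) 0) v ≤
            ((t : ℤ) - k - uInt t m n k).toNat * 1 := Nat.mul_le_mul_left _ b2
        have e3 : (uInt t m n k).toNat + ((t : ℤ) - k - uInt t m n k).toNat = t - k := by
          omega
        omega
      · rw [if_neg hu]
        push_neg at hu
        have huge : 1 - ((t : ℤ) - k) ≤ uInt t m n k :=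
          uInt_ge t m n k ht htm hmn hk hk1 (hleast (k - 1) (by omega))
        refine ⟨_, IsLead.mul ((isLead_Delta' k hm hmn hkm.le).pow
            ((t : ℤ) - k + uInt t m n k).toNat)
          ((isLead_Delta (k - 1) hm hmn).pow (-uInt t m n k).toNat), fun v => ?_⟩
        rw [Finsupp.add_apply, Finsupp.smul_apply, Finsupp.smul_apply, smul_eq_mul,
          smul_eq_mul]
        have b1 := DeltaLead_add_le k k hmn hkm.le le_rfl (by omega) v
        have b2 := DeltaLead_le (k - 1) hmn (by omega) hm v
        have e1 : ((t : ℤ) - k + uInt t m n k).toNat *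
            (DeltaLead m n k + diagD m n k (m - k) 0) v ≤
            ((t : ℤ) - k + uInt t m n k).toNat * 1 := Nat.mul_le_mul_left _ b1
        have e2 : (-uInt t m n k).toNat * DeltaLead m n (k - 1) v ≤
            (-uInt t m n k).toNat * 1 := Nat.mul_le_mul_left _ b2
        have e3 : ((t : ℤ) - k + uInt t m n k).toNat + (-uInt t m n k).toNat = t - k := by
          omega
        omega
  refine ⟨⟨D, hD.1, hD.2, hbound⟩, ?_⟩
  intro hmem
  have hset : {g : MvPolynomial (Fin m × Fin n) 𝔽 |
      ∃ v : Fin m × Fin n, g = MvPolynomial.X v ^ (t - k + 1)} =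
      (fun d => MvPolynomial.monomial d (1 : 𝔽)) ''
        {d : (Fin m × Fin n) →₀ ℕ | ∃ v : Fin m × Fin n, d = Finsupp.single v (t - k + 1)} := by
    ext g
    constructor
    · rintro ⟨v, rfl⟩
      exact ⟨Finsupp.single v (t - k + 1), ⟨v, rfl⟩, (MvPolynomial.X_pow_eq_monomial).symm⟩
    · rintro ⟨d, ⟨v, rfl⟩, rfl⟩
      exact ⟨v, (MvPolynomial.X_pow_eq_monomial).symm⟩
  rw [hset, MvPolynomial.mem_ideal_span_monomial_image] at hmem
  obtain ⟨d, ⟨v, rfl⟩, hle⟩ := hmem D hD.1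
  have h1 : Finsupp.single v (t - k + 1) v ≤ D v := hle v
  rw [Finsupp.single_eq_same] at h1
  have h2 := hbound v
  omega
end
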